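/- arXiv:1809.04761 — 4 statements merged into one kernel-verified Lean document; each statement's English description precedes it below -/
import Mathlib

section
/- Let f : Γ → Γ be an immersion of a finite graph. Suppose every edge of the subgraph Z ⊆ Γ of non-expanding edges has eventually periodic f-orbit. Then there exists K ≥ 1 such that for all k ≥ K and all points x, y lying in edges of Z, f^k(x) = f^k(y) implies f^{k−1}(x) = f^{k−1}(y). -/
/-- A finite combinatorial (Serre) graph: a finite set of vertices and a finite set of
oriented edges with a fixed-point-free involution `bar` (orientation reversal) and an
initial-vertex map `ι`. -/
structure CGraph where
  V : Type
  E : Type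
  [fV : Fintype V]
  [fE : Fintype E]
  [dV : DecidableEq V]
  [dE : DecidableEq E]
  ι : E → V
  bar : E → E
  bar_bar : ∀ e, bar (bar e) = e
  bar_ne : ∀ e, bar e ≠ e

attribute [instance] CGraph.fV CGraph.fE CGraph.dV CGraph.dE

namespace CGraph

variable (G : CGraph)

/-- Terminal vertex of an edge. -/
def τ (e : G.E) : G.V := G.ι (G.bar e)

/-- A list of edges is an edge path if consecutive edges are composable. -/
def IsPath (l : List G.E) : Prop := l.Chain' fun e e' => G.τ e = G.ι e'

/-- A path is reduced (immersed) if it has no backtracking. -/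
def IsReduced (l : List G.E) : Prop :=
  IsPath G l ∧ l.Chain' fun e e' => e' ≠ G.bar e

/-- The path `l` starts at the vertex `v`. -/
def StartsAt (l : List G.E) (v : G.V) : Prop := ∀ e ∈ l.head?, G.ι e = v

/-- The path `l` ends at the vertex `v`. -/
def EndsAt (l : List G.E) (v : G.V) : Prop := ∀ e ∈ l.getLast?, G.τ e = v

/-- A nontrivial closed edge path based at `v`. -/
def IsBasedLoopAt (l : List G.E) (v : G.V) : Prop :=
  l ≠ [] ∧ IsPath G l ∧ StartsAt G l v ∧ EndsAt G l v

/-- A nontrivial closed edge path (at some vertex). -/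
def IsCircuit (l : List G.E) : Prop :=
  l ≠ [] ∧ IsPath G l ∧ ∃ v, StartsAt G l v ∧ EndsAt G l v

/-- A circuit is cyclically reduced if it is reduced and there is no backtracking
around the basepoint. -/
def IsCyclicallyReduced (l : List G.E) : Prop :=
  IsReduced G l ∧ ∀ a ∈ l.head?, ∀ b ∈ l.getLast?, a ≠ G.bar b

/-- Elementary reduction of an edge path: deleting a backtracking pair. -/
def ReduceStep (l l' : List G.E) : Prop :=
  ∃ (l₁ l₂ : List G.E) (e : G.E), l = l₁ ++ e :: G.bar e :: l₂ ∧ l' = l₁ ++ l₂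

/-- The combinatorial length of a path after tightening (free reduction)
rel its endpoints. -/
noncomputable def redLen (l : List G.E) : ℕ :=
  sInf {n | ∃ l', Relation.ReflTransGen (ReduceStep G) l l' ∧
    (¬ ∃ l'', ReduceStep G l' l'') ∧ l'.length = n}

/-- One step of free homotopy of loops: an elementary reduction, its inverse,
or a cyclic rotation. -/
def FreeStep (l l' : List G.E) : Prop :=
  ReduceStep G l l' ∨ ReduceStep G l' l ∨ ∃ n, l' = l.rotate n

/-- Two closed edge paths are freely homotopic. -/
def FreelyHomotopic (l l' : List G.E) : Prop :=
  Relation.ReflTransGen (FreeStep G) l l'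

/-- The `d`-th power (concatenation) of a closed path. -/
def pow (l : List G.E) (d : ℕ) : List G.E := (List.replicate d l).flatten

/-- The valence of a vertex: the number of oriented edges emanating from it. -/
def valence (v : G.V) : ℕ := Fintype.card {e : G.E // G.ι e = v}

/-- The graph is connected. -/
def Conn : Prop :=
  ∀ u v : G.V, u = v ∨ ∃ l, l ≠ [] ∧ IsPath G l ∧ StartsAt G l u ∧ EndsAt G l v

/-- A (topological) graph map `Γ → Γ`: vertices to vertices, each edge to a nontrivial
edge path, compatibly with endpoints and orientation reversal. -/
structure GMap (G : CGraph) where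
  vmap : G.V → G.V
  emap : G.E → List G.E
  emap_ne : ∀ e, emap e ≠ []
  emap_path : ∀ e, IsPath G (emap e)
  emap_start : ∀ e, StartsAt G (emap e) (vmap (G.ι e))
  emap_bar : ∀ e, emap (G.bar e) = ((emap e).map G.bar).reverse

/-- The induced map of a graph map on edge paths. -/
def onPaths (F : GMap G) (l : List G.E) : List G.E := l.flatMap F.emap

/-- The `n`-th iterate `f^n` applied to an edge path. -/
def iterMap (F : GMap G) (n : ℕ) (l : List G.E) : List G.E := (onPaths G F)^[n] l

/-- A graph map is an immersion: it is locally injective, i.e. each edge maps to a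
reduced path and the derivative map on directions at each vertex is injective. -/
def IsImmersion (F : GMap G) : Prop :=
  (∀ e, IsReduced G (F.emap e)) ∧
  ∀ e₁ e₂ : G.E, G.ι e₁ = G.ι e₂ → (F.emap e₁).head? = (F.emap e₂).head? → e₁ = e₂

end CGraph

namespace CGraph

variable (G : CGraph)

/-- Points of the geometric realization of `G`: a point interior to an edge `e` at
parameter `t ∈ (0,1)`, or a vertex when `t ∈ {0,1}`. -/
abbrev Pt (G : CGraph) := G.E × ℝ

/-- `p` represents a vertex. -/
def IsVertexPt (p : Pt G) : Prop := p.2 = 0 ∨ p.2 = 1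

open Classical in
/-- The vertex represented by a point with parameter `0` or `1`. -/
noncomputable def ptVertex (p : Pt G) : G.V := if p.2 ≤ 0 then G.ι p.1 else G.τ p.1

/-- Two parametrized points represent the same point of the geometric realization. -/
def PtEq (p q : Pt G) : Prop :=
  p = q ∨ (q.1 = G.bar p.1 ∧ q.2 = 1 - p.2) ∨
    (IsVertexPt G p ∧ IsVertexPt G q ∧ ptVertex G p = ptVertex G q)

/-- The map induced by a graph map on points of the geometric realization, where each
edge is mapped across its image path with uniform speed. -/
noncomputable def ptMap (F : GMap G) : Pt G → Pt G := fun p =>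
  let l := F.emap p.1
  let m := l.length
  let j : ℕ := min (m - 1) (⌊(m : ℝ) * p.2⌋.toNat)
  (l.getD j p.1, (m : ℝ) * p.2 - (j : ℝ))

/-- An edge is non-expanding if the combinatorial lengths of its iterated images are
uniformly bounded. -/
def NonExpanding (F : GMap G) (e : G.E) : Prop :=
  ∃ B : ℕ, ∀ n : ℕ, (iterMap G F n [e]).length ≤ B

end CGraph

open CGraph
namespace CGraph

variable (G : CGraph) (F : GMap G)

/-- The single edge that a "simple" edge maps to. -/
noncomputable def sig : G.E → G.E := fun g => (F.emap g).getD 0 g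

lemma emap_len_pos (g : G.E) : 0 < (F.emap g).length :=
  List.length_pos_iff.mpr (F.emap_ne g)

lemma emap_eq_of_simple {g : G.E} (h : (F.emap g).length = 1) :
    F.emap g = [sig G F g] := by
  obtain ⟨a, ha⟩ := List.length_eq_one_iff.mp h
  simp [sig, ha]

lemma simple_bar {g : G.E} (h : (F.emap g).length = 1) :
    (F.emap (G.bar g)).length = 1 := by
  rw [F.emap_bar]; simpa using h

lemma sig_bar {g : G.E} (h : (F.emap g).length = 1) :
    sig G F (G.bar g) = G.bar (sig G F g) := by
  have hb := F.emap_bar g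
  rw [emap_eq_of_simple G F h] at hb
  simp [sig, hb]

lemma ptMap_simple {g : G.E} (h : (F.emap g).length = 1) (s : ℝ) :
    ptMap G F (g, s) = (sig G F g, s) := by
  show ((F.emap g).getD _ g, _) = _
  rw [h]
  simp [sig]

lemma ptMap_fst_mem (p : Pt G) : (ptMap G F p).1 ∈ F.emap p.1 := by
  have hm := emap_len_pos G F p.1
  show (F.emap p.1).getD (min ((F.emap p.1).length - 1) _) p.1 ∈ _
  rw [List.getD_eq_getElem (F.emap p.1) p.1 (by omega)]
  exact List.getElem_mem _

lemma le_length_onPaths (l : List G.E) : l.length ≤ (onPaths G F l).length := by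
  induction l with
  | nil => simp [onPaths]
  | cons a t ih =>
    have := emap_len_pos G F a
    simp only [onPaths, List.flatMap_cons, List.length_append, List.length_cons] at *
    omega

lemma iterLen_mono (e : G.E) : Monotone fun n => (iterMap G F n [e]).length := by
  apply monotone_nat_of_le_succ
  intro n
  show (iterMap G F n [e]).length ≤ (iterMap G F (n+1) [e]).length
  simp only [iterMap]
  rw [Function.iterate_succ_apply']
  exact le_length_onPaths G F _

lemma length_le_sum {l : List ℕ} (h1 : ∀ x ∈ l, 1 ≤ x) : l.length ≤ l.sum := by
  induction l with
  | nil => simp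
  | cons a t ih =>
    have := h1 a (by simp)
    have := ih (fun y hy => h1 y (List.mem_cons_of_mem _ hy))
    simp only [List.length_cons, List.sum_cons]
    omega

lemma sum_all_one {l : List ℕ} (h1 : ∀ x ∈ l, 1 ≤ x) (h2 : l.sum ≤ l.length) :
    ∀ x ∈ l, x = 1 := by
  induction l with
  | nil => simp
  | cons a t ih =>
    have ha := h1 a (by simp)
    have hlen : t.length ≤ t.sum :=
      length_le_sum (fun y hy => h1 y (List.mem_cons_of_mem _ hy))
    simp only [List.sum_cons, List.length_cons] at h2
    intro x hx
    rcases List.mem_cons.mp hx with rfl | hx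
    · omega
    · exact ih (fun y hy => h1 y (List.mem_cons_of_mem _ hy)) (by omega) x hx

lemma key_lemma (e : G.E)
    (hp : ∃ N p, 1 ≤ p ∧ ∀ n ≥ N, iterMap G F (n + p) [e] = iterMap G F n [e]) :
    ∃ N, ∀ n ≥ N, ∀ g ∈ iterMap G F n [e], (F.emap g).length = 1 := by
  obtain ⟨N, p, hp1, hper⟩ := hp
  refine ⟨N, fun n hn g hg => ?_⟩
  have h1 : (iterMap G F (n+1) [e]).length ≤ (iterMap G F n [e]).length := by
    calc (iterMap G F (n+1) [e]).length ≤ (iterMap G F (n+p) [e]).length :=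
          iterLen_mono G F e (by omega)
      _ = _ := by rw [hper n hn]
  have hsum : (iterMap G F (n+1) [e]).length
      = ((iterMap G F n [e]).map (fun g => (F.emap g).length)).sum := by
    rw [iterMap, Function.iterate_succ_apply']
    show (onPaths G F (iterMap G F n [e])).length = _
    rw [onPaths, List.length_flatMap]
    try simp [Function.comp_def]
    try rfl
  have := sum_all_one (l := (iterMap G F n [e]).map (fun g => (F.emap g).length))
    (by intro x hx
        obtain ⟨y, _, rfl⟩ := List.mem_map.mp hx
        exact emap_len_pos G F y)
    (by rw [← hsum, List.length_map]; exact h1)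
  exact this _ (List.mem_map_of_mem hg)

lemma iter_fst_mem (e : G.E) (t : ℝ) (n : ℕ) :
    ((ptMap G F)^[n] (e, t)).1 ∈ iterMap G F n [e] := by
  induction n with
  | zero => simp [iterMap]
  | succ n ih =>
    rw [Function.iterate_succ_apply', iterMap, Function.iterate_succ_apply']
    exact List.mem_flatMap.mpr ⟨_, ih, ptMap_fst_mem G F _⟩

lemma orbit_formula (e : G.E) {M : ℕ}
    (hM : ∀ n ≥ M, ∀ g ∈ iterMap G F n [e], (F.emap g).length = 1)
    (t : ℝ) {n : ℕ} (hn : M ≤ n) (m : ℕ) :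
    (ptMap G F)^[n + m] (e, t) =
      ((sig G F)^[m] (((ptMap G F)^[n] (e, t)).1), ((ptMap G F)^[n] (e, t)).2) := by
  induction m with
  | zero => simp
  | succ m ih =>
    have hmem := iter_fst_mem G F e t (n + m)
    have hsimple : (F.emap (((ptMap G F)^[n+m] (e,t)).1)).length = 1 :=
      hM (n+m) (by omega) _ hmem
    rw [ih] at hsimple
    rw [show n + (m+1) = (n+m) + 1 by ring, Function.iterate_succ_apply', ih,
      ptMap_simple G F hsimple, Function.iterate_succ_apply']

lemma orbit_formula_bar (g : G.E)
    (hsimp : ∀ m, (F.emap ((sig G F)^[m] g)).length = 1) (u : ℝ) (m : ℕ) :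
    (ptMap G F)^[m] (G.bar g, u) = (G.bar ((sig G F)^[m] g), u) := by
  induction m with
  | zero => simp
  | succ m ih =>
    rw [Function.iterate_succ_apply', ih,
      ptMap_simple G F (simple_bar G F (hsimp m)), sig_bar G F (hsimp m),
      Function.iterate_succ_apply']

lemma emap_last (g : G.E) : ∀ x ∈ (F.emap g).getLast?, G.τ x = F.vmap (G.τ g) := by
  intro x hx
  have hs := F.emap_start (G.bar g)
  rw [F.emap_bar g] at hs
  have hhead : ((F.emap g).map G.bar).reverse.head? = some (G.bar x) := by
    rw [List.head?_reverse, List.getLast?_map]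
    rw [Option.mem_def] at hx
    rw [hx]; rfl
  have h2 := hs _ hhead
  have : G.ι (G.bar g) = G.τ g := rfl
  rw [this] at h2
  exact h2

lemma ptMap_vertex (p : Pt G) (hp : IsVertexPt G p) :
    IsVertexPt G (ptMap G F p) ∧ ptVertex G (ptMap G F p) = F.vmap (ptVertex G p) := by
  have hm := emap_len_pos G F p.1
  obtain ⟨a, l', hl⟩ := List.exists_cons_of_ne_nil (F.emap_ne p.1)
  rcases hp with h0 | h1
  · have hpt : ptMap G F p = ((F.emap p.1).getD 0 p.1, 0) := by
      show ((F.emap p.1).getD _ p.1, _) = _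
      rw [h0]
      norm_num
    constructor
    · rw [hpt]; exact Or.inl rfl
    · rw [hpt, ptVertex, ptVertex]
      simp only [h0, le_refl, if_pos]
      have := F.emap_start p.1
      rw [hl] at this ⊢
      simpa using this a rfl
  · have hne := F.emap_ne p.1
    have hpt : ptMap G F p = ((F.emap p.1).getLast hne, 1) := by
      show ((F.emap p.1).getD _ p.1, _) = _
      rw [h1]
      have hj : min ((F.emap p.1).length - 1) (⌊((F.emap p.1).length : ℝ) * 1⌋.toNat)
          = (F.emap p.1).length - 1 := by
        norm_num
      rw [hj]
      refine Prod.ext ?_ ?_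
      · rw [List.getD_eq_getElem (F.emap p.1) p.1 (by omega), List.getLast_eq_getElem]
      · rw [Nat.cast_sub hm]
        push_cast
        ring
    constructor
    · rw [hpt]; exact Or.inr rfl
    · rw [hpt, ptVertex, ptVertex]
      rw [if_neg (by norm_num), if_neg (by rw [h1]; norm_num)]
      exact emap_last G F p.1 _ (by simp [List.getLast?_eq_getLast hne])

end CGraph
namespace CGraph
variable (G : CGraph) (F : GMap G)

lemma ptMap_iter_vertex (p : Pt G) (hp : IsVertexPt G p) (m : ℕ) :
    IsVertexPt G ((ptMap G F)^[m] p) ∧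
      ptVertex G ((ptMap G F)^[m] p) = F.vmap^[m] (ptVertex G p) := by
  induction m with
  | zero => exact ⟨hp, rfl⟩
  | succ m ih =>
    rw [Function.iterate_succ_apply', Function.iterate_succ_apply']
    obtain ⟨h1, h2⟩ := ptMap_vertex G F _ ih.1
    exact ⟨h1, by rw [h2, ih.2]⟩

end CGraph
/-- Let `f : Γ → Γ` be an immersion of a finite graph such that every non-expanding edge
has eventually periodic `f`-orbit. Then there is `K ≥ 1` such that for all `k ≥ K` and all
points `x`, `y` lying in non-expanding edges, `f^k(x) = f^k(y)` implies
`f^{k-1}(x) = f^{k-1}(y)` (in the geometric realization). -/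
theorem nonexpanding_eventually_injective (G : CGraph) (F : GMap G) (hF : IsImmersion G F)
    (hper : ∀ e : G.E, NonExpanding G F e →
      ∃ N p, 1 ≤ p ∧ ∀ n ≥ N, iterMap G F (n + p) [e] = iterMap G F n [e]) :
    ∃ K ≥ 1, ∀ k ≥ K, ∀ (e e' : G.E) (t t' : ℝ),
      NonExpanding G F e → NonExpanding G F e' →
      t ∈ Set.Icc (0 : ℝ) 1 → t' ∈ Set.Icc (0 : ℝ) 1 →
      PtEq G ((ptMap G F)^[k] (e, t)) ((ptMap G F)^[k] (e', t')) →
      PtEq G ((ptMap G F)^[k - 1] (e, t)) ((ptMap G F)^[k - 1] (e', t')) := by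
  classical
  have key : ∀ e : G.E, NonExpanding G F e →
      ∃ N, ∀ n ≥ N, ∀ g ∈ iterMap G F n [e], (F.emap g).length = 1 :=
    fun e he => key_lemma G F e (hper e he)
  set Msel : G.E → ℕ := fun e =>
    if h : NonExpanding G F e then (key e h).choose else 0 with hMsel
  have Mspec : ∀ e, NonExpanding G F e →
      ∀ n ≥ Msel e, ∀ g ∈ iterMap G F n [e], (F.emap g).length = 1 := by
    intro e h
    simp only [hMsel, dif_pos h]
    exact (key e h).choose_spec
  set maxM := Finset.univ.sup Msel with hmaxM
  have hmax : ∀ e, Msel e ≤ maxM := fun e => Finset.le_sup (Finset.mem_univ e)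
  obtain ⟨a, b, hab, hfab⟩ : ∃ a b : ℕ, a < b ∧ (sig G F)^[a] = (sig G F)^[b] := by
    obtain ⟨a, b, hne, h⟩ :=
      Finite.exists_ne_map_eq_of_infinite (fun n : ℕ => (sig G F)^[n])
    rcases Ne.lt_or_gt hne with h' | h'
    · exact ⟨a, b, h', h⟩
    · exact ⟨b, a, h', h.symm⟩
  set P := b - a with hP
  have hP1 : 1 ≤ P := by omega
  have hsigP : ∀ m, a ≤ m → (sig G F)^[m + P] = (sig G F)^[m] := by
    intro m hm
    have h3 := congrArg (fun f => (sig G F)^[m - a] ∘ f) hfab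
    simp only [← Function.iterate_add] at h3
    rw [show m - a + a = m by omega, show m - a + b = m + P by omega] at h3
    exact h3.symm
  refine ⟨maxM + a + 1, by omega, ?_⟩
  intro k hk e e' t t' he he' ht ht' hpe
  -- pointwise eventual periodicity
  have periodic : ∀ (e : G.E), NonExpanding G F e → ∀ (t : ℝ) (n : ℕ), maxM + a ≤ n →
      (ptMap G F)^[n + P] (e, t) = (ptMap G F)^[n] (e, t) := by
    intro e he t n hn
    have hMe := Mspec e he
    have hc : Msel e ≤ n := le_trans (hmax e) (by omega)
    have h1 := orbit_formula G F e hMe t (le_refl (Msel e)) (n - Msel e + P)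
    have h2 := orbit_formula G F e hMe t (le_refl (Msel e)) (n - Msel e)
    have e1 : Msel e + (n - Msel e + P) = n + P := by omega
    have e2 : Msel e + (n - Msel e) = n := by omega
    rw [e1] at h1
    rw [e2] at h2
    rw [h1, h2]
    have hme := hmax e
    have : (sig G F)^[n - Msel e + P] = (sig G F)^[n - Msel e] :=
      hsigP _ (by omega)
    rw [this]
  have hkM : Msel e ≤ k := le_trans (hmax e) (by omega)
  have hkM' : Msel e' ≤ k := le_trans (hmax e') (by omega)
  -- write both k-1 iterates via P-1 more steps after k
  have hx : (ptMap G F)^[k - 1] (e, t) = (ptMap G F)^[P - 1] ((ptMap G F)^[k] (e, t)) := by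
    have hp1 := periodic e he t (k - 1) (by omega)
    have : (k - 1) + P = (P - 1) + k := by omega
    rw [this] at hp1
    rw [← hp1, Function.iterate_add_apply]
  have hy : (ptMap G F)^[k - 1] (e', t') = (ptMap G F)^[P - 1] ((ptMap G F)^[k] (e', t')) := by
    have hp1 := periodic e' he' t' (k - 1) (by omega)
    have : (k - 1) + P = (P - 1) + k := by omega
    rw [this] at hp1
    rw [← hp1, Function.iterate_add_apply]
  set A := (ptMap G F)^[k] (e, t) with hA
  set B := (ptMap G F)^[k] (e', t') with hB
  -- the σ-orbit of A's edge consists of simple edges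
  have hsimpA : ∀ m, (F.emap ((sig G F)^[m] A.1)).length = 1 := by
    intro m
    have hfm := orbit_formula G F e (Mspec e he) t hkM m
    have hmem := iter_fst_mem G F e t (k + m)
    rw [hfm] at hmem
    exact Mspec e he (k + m) (by omega) _ hmem
  -- formula for f^[P-1] A
  have hfa : (ptMap G F)^[P - 1] A = ((sig G F)^[P - 1] A.1, A.2) := by
    have hfm := orbit_formula G F e (Mspec e he) t hkM (P - 1)
    rw [show k + (P - 1) = (P - 1) + k by omega, Function.iterate_add_apply] at hfm
    exact hfm
  rcases hpe with hAB | ⟨hb1, hb2⟩ | ⟨hvA, hvB, hv⟩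
  · exact Or.inl (by rw [hx, hy, hAB])
  · -- reversed-edge case
    have hBpair : B = (G.bar A.1, 1 - A.2) := Prod.ext hb1 hb2
    have hfb : (ptMap G F)^[P - 1] B = (G.bar ((sig G F)^[P - 1] A.1), 1 - A.2) := by
      rw [hBpair]
      exact orbit_formula_bar G F A.1 hsimpA (1 - A.2) (P - 1)
    rw [hx, hy, hfa, hfb]
    exact Or.inr (Or.inl ⟨rfl, rfl⟩)
  · -- common vertex case
    obtain ⟨hvA', hvAe⟩ := ptMap_iter_vertex G F A hvA (P - 1)
    obtain ⟨hvB', hvBe⟩ := ptMap_iter_vertex G F B hvB (P - 1)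
    rw [hx, hy]
    exact Or.inr (Or.inr ⟨hvA', hvB', by rw [hvAe, hvBe, hv]⟩)
end

section
/- Let f : Γ → Γ be an immersion of a finite connected core graph with no nontrivial f-invariant forest and no invariant loop of degree 1 (i.e., no k ≥ 1 and nontrivial loop σ with f^k(σ) freely homotopic to σ). Then there exists n ≥ 1 such that the combinatorial length of f^n(e) is at least 2 for every edge e of Γ. -/
open CGraph

namespace ExpandHelpers

open CGraph

variable {G : CGraph} (F : GMap G)

/-- The image edge of a singleton-image edge. -/
def phi (e : G.E) : G.E := (F.emap e).head (F.emap_ne e)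

lemma phi_eq {e a : G.E} (h : F.emap e = [a]) : phi F e = a := by
  simp [phi, h]

lemma chain'_combine {α : Type*} {R S T : α → α → Prop} {P : α → Prop} :
    ∀ {l : List α}, l.Chain' R → l.Chain' S → (∀ e ∈ l, P e) →
      (∀ a b, P a → P b → R a b → S a b → T a b) → l.Chain' T
  | [], _, _, _, _ => List.isChain_nil
  | [_], _, _, _, _ => List.isChain_singleton _
  | a :: b :: t, hR, hS, hP, himp => by
      simp only [List.Chain', List.isChain_cons_cons] at hR hS ⊢
      exact ⟨himp a b (hP a (by simp)) (hP b (by simp)) hR.1 hS.1,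
        chain'_combine hR.2 hS.2 (fun e he => hP e (List.mem_cons_of_mem _ he)) himp⟩

lemma emap_bar_sing {e : G.E} (h : F.emap e = [phi F e]) :
    F.emap (G.bar e) = [G.bar (phi F e)] := by
  rw [F.emap_bar, h]; rfl

lemma phi_bar {e : G.E} (h : F.emap e = [phi F e]) :
    phi F (G.bar e) = G.bar (phi F e) := phi_eq F (emap_bar_sing F h)

lemma iota_phi {e : G.E} (h : F.emap e = [phi F e]) :
    G.ι (phi F e) = F.vmap (G.ι e) := by
  have hs := F.emap_start e
  rw [h] at hs
  exact hs _ rfl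

lemma tau_phi {e : G.E} (h : F.emap e = [phi F e]) :
    G.τ (phi F e) = F.vmap (G.τ e) := by
  have h2 := emap_bar_sing F h
  have hs := F.emap_start (G.bar e)
  rw [h2] at hs
  exact hs _ rfl

lemma emap_inj (hF : IsImmersion G F) {a b : G.E} (hι : G.ι a = G.ι b)
    (h : F.emap a = F.emap b) : a = b := hF.2 a b hι (by rw [h])

lemma onPaths_eq_map : ∀ {l : List G.E}, (∀ e ∈ l, F.emap e = [phi F e]) →
    onPaths G F l = l.map (phi F)
  | [], _ => rfl
  | a :: t, h => by
      have ht := onPaths_eq_map (l := t) fun e he => h e (List.mem_cons_of_mem _ he)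
      simp only [onPaths, List.flatMap_cons] at ht ⊢
      rw [h a (by simp), ht, List.map_cons, List.singleton_append]

lemma step (hF : IsImmersion G F) (S : Set G.E)
    (hsing : ∀ e ∈ S, F.emap e = [phi F e])
    (hφ : ∀ e ∈ S, phi F e ∈ S)
    {l : List G.E} (hlS : ∀ e ∈ l, e ∈ S)
    (hcirc : IsCircuit G l) (hred : IsCyclicallyReduced G l) :
    onPaths G F l = l.map (phi F) ∧ (∀ e ∈ l.map (phi F), e ∈ S) ∧
      IsCircuit G (l.map (phi F)) ∧ IsCyclicallyReduced G (l.map (phi F)) := by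
  obtain ⟨hne, hpath, v, hstart, hend⟩ := hcirc
  obtain ⟨⟨hpath', hnb⟩, hbdy⟩ := hred
  have hsingl : ∀ e ∈ l, F.emap e = [phi F e] := fun e he => hsing e (hlS e he)
  have hPath : IsPath G (l.map (phi F)) := by
    simp only [IsPath, List.Chain', List.isChain_map]
    exact chain'_combine hpath hpath hlS (fun a b ha hb hR _ => by
      rw [tau_phi F (hsing a ha), iota_phi F (hsing b hb), hR])
  have hStart : StartsAt G (l.map (phi F)) (F.vmap v) := by
    intro x hx
    rw [List.head?_map, Option.mem_map] at hx
    obtain ⟨a, ha, rfl⟩ := hx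
    rw [iota_phi F (hsing a (hlS a (List.mem_of_mem_head? ha))), hstart a ha]
  have hEnd : EndsAt G (l.map (phi F)) (F.vmap v) := by
    intro x hx
    rw [List.getLast?_map, Option.mem_map] at hx
    obtain ⟨b, hb, rfl⟩ := hx
    rw [tau_phi F (hsing b (hlS b (List.mem_of_mem_getLast? hb))), hend b hb]
  refine ⟨onPaths_eq_map F hsingl, ?_, ⟨by simpa using hne, hPath, F.vmap v, hStart, hEnd⟩,
    ⟨⟨hPath, ?_⟩, ?_⟩⟩
  · intro e he
    rw [List.mem_map] at he
    obtain ⟨a, ha, rfl⟩ := he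
    exact hφ a (hlS a ha)
  · simp only [List.Chain', List.isChain_map]
    refine chain'_combine hpath hnb hlS (fun a b ha hb hR hS' heq => ?_)
    have hba : F.emap b = F.emap (G.bar a) := by
      rw [hsing b hb, heq, emap_bar_sing F (hsing a ha)]
    have hιb : G.ι b = G.ι (G.bar a) := by
      show G.ι b = G.τ a
      rw [hR]
    exact hS' (emap_inj F hF hιb hba)
  · intro a' ha' b' hb'
    rw [List.head?_map, Option.mem_map] at ha'
    rw [List.getLast?_map, Option.mem_map] at hb'
    obtain ⟨a, ha, rfl⟩ := ha'
    obtain ⟨b, hb, rfl⟩ := hb'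
    intro heq
    have hma : a ∈ l := List.mem_of_mem_head? ha
    have hmb : b ∈ l := List.mem_of_mem_getLast? hb
    have hba : F.emap a = F.emap (G.bar b) := by
      rw [hsing a (hlS a hma), heq, emap_bar_sing F (hsing b (hlS b hmb))]
    have hιa : G.ι a = G.ι (G.bar b) := by
      show G.ι a = G.τ b
      rw [hstart a ha, hend b hb]
    exact hbdy a ha b hb (emap_inj F hF hιa hba)

lemma iter_invariant (hF : IsImmersion G F) (S : Set G.E)
    (hsing : ∀ e ∈ S, F.emap e = [phi F e])
    (hφ : ∀ e ∈ S, phi F e ∈ S)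
    {l : List G.E} (hlS : ∀ e ∈ l, e ∈ S)
    (hcirc : IsCircuit G l) (hred : IsCyclicallyReduced G l) :
    ∀ n, (∀ e ∈ iterMap G F n l, e ∈ S) ∧ IsCircuit G (iterMap G F n l) ∧
      IsCyclicallyReduced G (iterMap G F n l) ∧ (iterMap G F n l).length = l.length := by
  intro n
  induction n with
  | zero => exact ⟨hlS, ⟨hcirc.1, hcirc.2.1, hcirc.2.2⟩, hred, rfl⟩
  | succ n ih =>
    obtain ⟨ihS, ihc, ihr, ihl⟩ := ih
    obtain ⟨heq, hS, hc, hr⟩ := step F hF S hsing hφ ihS ihc ihr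
    have hit : iterMap G F (n + 1) l = (iterMap G F n l).map (phi F) := by
      show (onPaths G F)^[n + 1] l = _
      rw [Function.iterate_succ_apply']
      exact heq
    rw [hit]
    exact ⟨hS, hc, hr, by rw [List.length_map, ihl]⟩

lemma length_le_onPaths (l : List G.E) : l.length ≤ (onPaths G F l).length := by
  induction l with
  | nil => simp [onPaths]
  | cons a t ih =>
    have h1 : 0 < (F.emap a).length := List.length_pos_iff.mpr (F.emap_ne a)
    simp only [onPaths, List.flatMap_cons, List.length_append, List.length_cons] at *
    omega

lemma iter_mono (l : List G.E) : Monotone fun n => (iterMap G F n l).length := by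
  refine monotone_nat_of_le_succ fun n => ?_
  show (iterMap G F n l).length ≤ ((onPaths G F)^[n + 1] l).length
  rw [Function.iterate_succ_apply']
  exact length_le_onPaths F _

end ExpandHelpers


open ExpandHelpers in
/-- Let `f : Γ → Γ` be an immersion of a finite connected core graph with no nontrivial
`f`-invariant forest and no invariant loop of degree 1 (no `k ≥ 1` and nontrivial loop `σ`
with `f^k(σ)` freely homotopic to `σ`). Then some iterate `f^n` sends every edge to an
edge path of combinatorial length at least 2. -/
theorem exists_iterate_expanding (G : CGraph) (F : GMap G) (hF : IsImmersion G F)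
    (hconn : Conn G) (hcore : ∀ v : G.V, valence G v ≠ 1)
    (hforest : ¬ ∃ S : Set G.E, S.Nonempty ∧ (∀ e ∈ S, G.bar e ∈ S) ∧
      (∀ e ∈ S, ∀ e' ∈ F.emap e, e' ∈ S) ∧
      ¬ ∃ l : List G.E, l ≠ [] ∧ (∀ e ∈ l, e ∈ S) ∧ IsCircuit G l ∧ IsCyclicallyReduced G l)
    (hatoroidal : ¬ ∃ k ≥ 1, ∃ σ : List G.E, IsCircuit G σ ∧ IsCyclicallyReduced G σ ∧
      FreelyHomotopic G (iterMap G F k σ) σ) :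
    ∃ n ≥ 1, ∀ e : G.E, 2 ≤ (iterMap G F n [e]).length := by
  classical
  have hone : ∀ (e : G.E) (n : ℕ), 1 ≤ (iterMap G F n [e]).length := by
    intro e n
    have := iter_mono F [e] (Nat.zero_le n)
    simpa [iterMap] using this
  by_cases hsing : ∃ e : G.E, ∀ n, (iterMap G F n [e]).length = 1
  · exfalso
    obtain ⟨e₀, he₀⟩ := hsing
    -- the orbit of e₀ consists of single edges
    choose g hg using fun n => List.length_eq_one_iff.mp (he₀ n)
    have hstep : ∀ n, F.emap (g n) = [g (n + 1)] := by
      intro n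
      have h1 : iterMap G F (n + 1) [e₀] = onPaths G F (iterMap G F n [e₀]) := by
        show (onPaths G F)^[n + 1] [e₀] = _
        rw [Function.iterate_succ_apply']
        rfl
      have h2 : onPaths G F [g n] = F.emap (g n) := by
        simp [onPaths]
      rw [hg n, h2] at h1
      rw [← h1, hg (n + 1)]
    set S : Set G.E := {e | ∃ n, e = g n ∨ e = G.bar (g n)} with hS_def
    have hbarstep : ∀ n, F.emap (G.bar (g n)) = [G.bar (g (n + 1))] := by
      intro n
      rw [F.emap_bar, hstep n]
      rfl
    have hSsing : ∀ e ∈ S, F.emap e = [phi F e] := by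
      rintro e ⟨n, rfl | rfl⟩
      · rw [phi_eq F (hstep n)]; exact hstep n
      · rw [phi_eq F (hbarstep n)]; exact hbarstep n
    have hSphi : ∀ e ∈ S, phi F e ∈ S := by
      rintro e ⟨n, rfl | rfl⟩
      · exact ⟨n + 1, Or.inl (phi_eq F (hstep n))⟩
      · exact ⟨n + 1, Or.inr (phi_eq F (hbarstep n))⟩
    -- extract a cyclically reduced circuit inside S
    have hcir : ∃ l : List G.E, l ≠ [] ∧ (∀ e ∈ l, e ∈ S) ∧ IsCircuit G l ∧
        IsCyclicallyReduced G l := by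
      by_contra hc
      refine hforest ⟨S, ⟨g 0, 0, Or.inl rfl⟩, ?_, ?_, hc⟩
      · rintro e ⟨n, rfl | rfl⟩
        · exact ⟨n, Or.inr rfl⟩
        · exact ⟨n, Or.inl (G.bar_bar (g n))⟩
      · intro e he e' he'
        rw [hSsing e he] at he'
        simp only [List.mem_singleton] at he'
        subst he'
        exact hSphi e he
    obtain ⟨l, hlne, hlS, hlcirc, hlred⟩ := hcir
    have hinv := iter_invariant F hF S hSsing hSphi hlS hlcirc hlred
    -- pigeonhole: two iterates coincide
    have hmt : Set.MapsTo (fun n => iterMap G F n l) Set.univ {l' : List G.E | l'.length = l.length} :=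
      fun n _ => (hinv n).2.2.2
    obtain ⟨i, -, j, -, hij, heq⟩ := Set.infinite_univ.exists_ne_map_eq_of_mapsTo hmt
      (List.finite_length_eq G.E l.length)
    wlog hlt : i < j generalizing i j
    · exact this j i hij.symm heq.symm (by omega)
    refine hatoroidal ⟨j - i, by omega, iterMap G F i l, (hinv i).2.1, (hinv i).2.2.1, ?_⟩
    have : iterMap G F (j - i) (iterMap G F i l) = iterMap G F j l := by
      show (onPaths G F)^[j - i] ((onPaths G F)^[i] l) = (onPaths G F)^[j] l
      rw [← Function.iterate_add_apply, Nat.sub_add_cancel (le_of_lt hlt)]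
    rw [this, ← heq]
    exact Relation.ReflTransGen.refl
  · push_neg at hsing
    choose m hm using hsing
    refine ⟨(Finset.univ.sup m) + 1, by omega, fun e => ?_⟩
    have h1 := hone e (m e)
    have h2 : 2 ≤ (iterMap G F (m e) [e]).length := by
      have := hm e
      omega
    exact le_trans h2 (iter_mono F [e]
      (le_trans (Finset.le_sup (Finset.mem_univ e)) (Nat.le_succ _)))
end

section
/- Let f : Γ → Γ be an immersion of a finite graph and suppose Γ has a nontrivial f-invariant forest F. Let Γ' be the graph obtained by collapsing each component of a maximal f-invariant forest to a point, and f' : Γ' → Γ' the induced map. Then f' is again an immersion. -/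
open CGraph

section Aux

variable (G : CGraph)

lemma CF_bar_inj : Function.Injective G.bar := fun a b h => by
  have h2 := congrArg G.bar h; rwa [G.bar_bar, G.bar_bar] at h2

lemma CF_tau_bar (e : G.E) : G.τ (G.bar e) = G.ι e := by
  simp [CGraph.τ, G.bar_bar]

/-- There is no nonempty closed reduced path all of whose edges lie in a forest `S`. -/
lemma CF_no_closed_reduced (S : Set G.E)
    (hSforest : ¬ ∃ l : List G.E, l ≠ [] ∧ (∀ e ∈ l, e ∈ S) ∧
      IsCircuit G l ∧ IsCyclicallyReduced G l) :
    ∀ (n : ℕ) (l : List G.E), l.length ≤ n → l ≠ [] → (∀ e ∈ l, e ∈ S) → IsPath G l →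
      l.Chain' (fun e e' => e' ≠ G.bar e) →
      (∀ a ∈ l.head?, ∀ b ∈ l.getLast?, G.τ b = G.ι a) → False := by
  intro n
  induction n with
  | zero =>
    intro l hlen hne _ _ _ _
    cases l with
    | nil => exact hne rfl
    | cons a t => simp at hlen
  | succ n ih =>
    intro l hlen hne hS hpath hred hclosed
    by_cases hcyc : ∀ a ∈ l.head?, ∀ b ∈ l.getLast?, a ≠ G.bar b
    · apply hSforest
      refine ⟨l, hne, hS, ⟨hne, hpath, ?_⟩, ⟨hpath, hred⟩, hcyc⟩
      cases l with
      | nil => exact absurd rfl hne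
      | cons a t =>
        refine ⟨G.ι a, ?_, ?_⟩
        · intro e he
          simp only [List.head?_cons, Option.mem_def, Option.some_inj] at he
          subst he; rfl
        · intro b hb
          exact hclosed a (by simp) b hb
    · push_neg at hcyc
      obtain ⟨a, ha, b, hb, hab⟩ := hcyc
      cases l with
      | nil => exact hne rfl
      | cons a0 t =>
        obtain rfl : a0 = a := by simpa using ha
        rcases List.eq_nil_or_concat t with rfl | ⟨t', b0, rfl⟩
        · obtain rfl : a0 = b := by simpa using hb
          exact G.bar_ne a0 hab.symm
        · rw [List.concat_eq_append] at hlen hne hS hpath hred hclosed hb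
          obtain rfl : b0 = b := by
            rw [show a0 :: (t' ++ [b0]) = (a0 :: t') ++ [b0] from rfl,
              List.getLast?_concat] at hb
            simpa using hb
          have hba : b0 = G.bar a0 := by rw [hab, G.bar_bar]
          cases t' with
          | nil =>
            simp only [List.nil_append] at hred
            exact (List.isChain_pair.mp hred) hba
          | cons c t'' =>
            have hminfix : (c :: t'') <:+: a0 :: ((c :: t'') ++ [b0]) := ⟨[a0], [b0], by simp⟩
            apply ih (c :: t'')
              (by simp only [List.length_cons, List.length_append] at hlen ⊢; omega)
              (by simp)
              (fun e he => hS e (by simp only [List.mem_cons, List.mem_append] at he ⊢; tauto))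
              (hpath.infix hminfix) (hred.infix hminfix)
            intro x hx y hy
            obtain rfl : c = x := by simpa using hx
            have h1 : G.τ a0 = G.ι c := by
              have h := (List.isChain_cons.mp hpath).1
              exact h c (by simp)
            have h2 : G.τ y = G.ι b0 := by
              have hpath' : IsPath G ((c :: t'') ++ [b0]) := hpath.tail
              exact (List.isChain_append.mp hpath').2.2 y hy b0 (by simp)
            calc G.τ y = G.ι b0 := h2
              _ = G.τ a0 := by rw [hba]; rfl
              _ = G.ι c := h1

/-- A reduced path cannot contain a segment `x (S-edges) x̄`. -/
lemma CF_no_S_segment (S : Set G.E)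
    (hSforest : ¬ ∃ l : List G.E, l ≠ [] ∧ (∀ e ∈ l, e ∈ S) ∧
      IsCircuit G l ∧ IsCyclicallyReduced G l) :
    ∀ (l₁ m l₂ : List G.E) (x : G.E),
      IsReduced G (l₁ ++ x :: m ++ G.bar x :: l₂) → (∀ e ∈ m, e ∈ S) → False := by
  intro l₁ m l₂ x hredu hm
  obtain ⟨hpath, hred⟩ := hredu
  cases m with
  | nil =>
    have h2 : List.Chain' (fun e e' => e' ≠ G.bar e) [x, G.bar x] :=
      hred.infix ⟨l₁, l₂, by simp⟩
    exact (List.isChain_pair.mp h2) rfl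
  | cons c t =>
    have hinfix : (c :: t) <:+: l₁ ++ x :: (c :: t) ++ G.bar x :: l₂ :=
      ⟨l₁ ++ [x], G.bar x :: l₂, by simp⟩
    have hinfix2 : (x :: (c :: t)) <:+: l₁ ++ x :: (c :: t) ++ G.bar x :: l₂ :=
      ⟨l₁, G.bar x :: l₂, by simp⟩
    have hinfix3 : ((c :: t) ++ [G.bar x]) <:+: l₁ ++ x :: (c :: t) ++ G.bar x :: l₂ :=
      ⟨l₁ ++ [x], l₂, by simp⟩
    apply CF_no_closed_reduced G S hSforest (c :: t).length (c :: t) le_rfl (by simp) hm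
      (hpath.infix hinfix) (hred.infix hinfix)
    intro a' ha' b' hb'
    obtain rfl : c = a' := by simpa using ha'
    have h1 : G.τ x = G.ι c := by
      have h := (List.isChain_cons.mp (hpath.infix hinfix2)).1
      exact h c (by simp)
    have h2 : G.τ b' = G.ι (G.bar x) := by
      exact (List.isChain_append.mp (hpath.infix hinfix3)).2.2 b' hb' (G.bar x) (by simp)
    calc G.τ b' = G.ι (G.bar x) := h2
      _ = G.τ x := rfl
      _ = G.ι c := h1

lemma CF_filterMap_head_decomp {α β : Type*} (g : α → Option β) :
    ∀ (l : List α) (y : β), (l.filterMap g).head? = some y →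
      ∃ m x t, l = m ++ x :: t ∧ (∀ e ∈ m, g e = none) ∧ g x = some y := by
  intro l
  induction l with
  | nil => simp
  | cons a t ih =>
    intro y hy
    cases hga : g a with
    | none =>
      rw [List.filterMap_cons_none hga] at hy
      obtain ⟨m, x, t₂, hdec, hmm, hx⟩ := ih y hy
      exact ⟨a :: m, x, t₂, by rw [hdec]; rfl,
        by intro e he; rcases List.mem_cons.mp he with rfl | he; exact hga; exact hmm e he, hx⟩
    | some b =>
      rw [List.filterMap_cons_some hga] at hy
      simp only [List.head?_cons, Option.some_inj] at hy
      exact ⟨[], a, t, rfl, by simp, by rw [hga, hy]⟩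

lemma CF_chain'_filterMap {α β : Type*} (g : α → Option β) (R : β → β → Prop) :
    ∀ l : List α,
      (∀ (l₁ m t : List α) (x y : α) (bx b_y : β),
        l = l₁ ++ x :: (m ++ y :: t) → g x = some bx → (∀ e ∈ m, g e = none) →
        g y = some b_y → R bx b_y) →
      (l.filterMap g).Chain' R := by
  intro l
  induction l with
  | nil => intro _; exact List.isChain_nil
  | cons a t ih =>
    intro H
    cases hga : g a with
    | none =>
      rw [List.filterMap_cons_none hga]
      exact ih (fun l₁ m t' x y bx b_y hdec => H (a :: l₁) m t' x y bx b_y (by rw [hdec]; rfl))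
    | some b =>
      rw [List.filterMap_cons_some hga]
      apply List.isChain_cons.mpr
      constructor
      · intro y hy
        obtain ⟨m, x, t₂, hdec, hmm, hx⟩ := CF_filterMap_head_decomp g t y hy
        exact H [] m t₂ a x b y (by rw [hdec]; rfl) hga hmm hx
      · exact ih (fun l₁ m t' x y bx b_y hdec => H (a :: l₁) m t' x y bx b_y (by rw [hdec]; rfl))

lemma CF_emap_head_bar (F : GMap G) (e : G.E) :
    (F.emap (G.bar e)).head? = (F.emap e).getLast?.map G.bar := by
  rw [F.emap_bar, List.head?_reverse, List.getLast?_map]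

lemma CF_emap_ends (F : GMap G) (e : G.E) : EndsAt G (F.emap e) (F.vmap (G.τ e)) := by
  intro b hb
  have h1 := F.emap_start (G.bar e) (G.bar b) (by
    rw [CF_emap_head_bar]
    simp only [Option.mem_def] at hb ⊢
    rw [hb]; rfl)
  exact h1

lemma CF_reduced_append {l₁ l₂ : List G.E} (h₁ : IsReduced G l₁) (h₂ : IsReduced G l₂)
    (hj : ∀ x ∈ l₁.getLast?, ∀ y ∈ l₂.head?, G.τ x = G.ι y ∧ y ≠ G.bar x) :
    IsReduced G (l₁ ++ l₂) :=
  ⟨List.isChain_append.mpr ⟨h₁.1, h₂.1, fun x hx y hy => (hj x hx y hy).1⟩,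
   List.isChain_append.mpr ⟨h₁.2, h₂.2, fun x hx y hy => (hj x hx y hy).2⟩⟩

lemma CF_onPaths_reduced (F : GMap G) (hF : IsImmersion G F) :
    ∀ l, IsReduced G l → IsReduced G (onPaths G F l) := by
  intro l
  induction l with
  | nil => intro _; exact ⟨List.isChain_nil, List.isChain_nil⟩
  | cons a t ih =>
    intro hl
    have htred : IsReduced G t := ⟨hl.1.tail, hl.2.tail⟩
    rw [show onPaths G F (a :: t) = F.emap a ++ onPaths G F t from List.flatMap_cons ..]
    apply CF_reduced_append G (hF.1 a) (ih htred)
    intro x hx y hy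
    cases t with
    | nil => simp [onPaths] at hy
    | cons b t' =>
      have hy' : y ∈ (F.emap b).head? := by
        rw [show onPaths G F (b :: t') = F.emap b ++ onPaths G F t' from List.flatMap_cons ..,
          List.head?_append_of_ne_nil _ (F.emap_ne b)] at hy
        exact hy
      have hab : G.τ a = G.ι b := (List.isChain_cons_cons.mp hl.1).1
      have hnb : b ≠ G.bar a := (List.isChain_cons_cons.mp hl.2).1
      constructor
      · have e1 : G.τ x = F.vmap (G.τ a) := CF_emap_ends G F a x hx
        have e2 : G.ι y = F.vmap (G.ι b) := F.emap_start b y hy'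
        rw [e1, e2, hab]
      · intro hcon
        apply hnb
        have hhead : (F.emap (G.bar a)).head? = (F.emap b).head? := by
          rw [CF_emap_head_bar]
          simp only [Option.mem_def] at hx hy'
          rw [hx, hy']
          simp [hcon]
        exact (hF.2 (G.bar a) b hab hhead).symm

/-- An `S`-walk from `u` to `v`. -/
def CFWalk (S : Set G.E) (u v : G.V) (q : List G.E) : Prop :=
  IsPath G q ∧ (∀ e ∈ q, e ∈ S) ∧ StartsAt G q u ∧ EndsAt G q v ∧ (q = [] → u = v)

lemma CF_walk_symm (S : Set G.E) (hSbar : ∀ e ∈ S, G.bar e ∈ S) {u v : G.V} {q : List G.E}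
    (hq : CFWalk G S u v q) : CFWalk G S v u ((q.map G.bar).reverse) := by
  obtain ⟨hpath, hS, hst, hen, hemp⟩ := hq
  refine ⟨?_, ?_, ?_, ?_, ?_⟩
  · rw [IsPath, List.Chain', List.isChain_reverse, List.isChain_map]
    exact hpath.imp (fun a b h => by
      show G.τ (G.bar b) = G.ι (G.bar a)
      rw [CF_tau_bar]
      show G.ι b = G.τ a
      exact h.symm)
  · intro e he
    simp only [List.mem_reverse, List.mem_map] at he
    obtain ⟨e', he', rfl⟩ := he
    exact hSbar e' (hS e' he')
  · intro e he
    rw [List.head?_reverse, List.getLast?_map] at he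
    simp only [Option.mem_def, Option.map_eq_some_iff] at he
    obtain ⟨b, hb, rfl⟩ := he
    rw [show G.ι (G.bar b) = G.τ b from rfl]
    exact hen b hb
  · intro e he
    rw [List.getLast?_reverse, List.head?_map] at he
    simp only [Option.mem_def, Option.map_eq_some_iff] at he
    obtain ⟨b, hb, rfl⟩ := he
    rw [CF_tau_bar]
    exact hst b hb
  · intro h
    simp only [List.reverse_eq_nil_iff, List.map_eq_nil_iff] at h
    exact (hemp h).symm

lemma CF_walk_trans (S : Set G.E) {u v w : G.V} {q₁ q₂ : List G.E}
    (h₁ : CFWalk G S u v q₁) (h₂ : CFWalk G S v w q₂) : CFWalk G S u w (q₁ ++ q₂) := by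
  obtain ⟨hp₁, hS₁, hst₁, hen₁, hemp₁⟩ := h₁
  obtain ⟨hp₂, hS₂, hst₂, hen₂, hemp₂⟩ := h₂
  refine ⟨?_, ?_, ?_, ?_, ?_⟩
  · exact List.isChain_append.mpr ⟨hp₁, hp₂, fun x hx y hy => by rw [hen₁ x hx, hst₂ y hy]⟩
  · intro e he; rcases List.mem_append.mp he with h | h; exact hS₁ e h; exact hS₂ e h
  · intro e he
    cases q₁ with
    | nil =>
      rw [List.nil_append] at he
      rw [hst₂ e he, (hemp₁ rfl)]
    | cons a t =>
      rw [List.head?_append_of_ne_nil _ (by simp)] at he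
      exact hst₁ e he
  · intro e he
    rcases List.eq_nil_or_concat q₂ with rfl | ⟨t, b, rfl⟩
    · rw [List.append_nil] at he
      rw [hen₁ e he, hemp₂ rfl]
    · rw [List.concat_eq_append, ← List.append_assoc, List.getLast?_concat] at he
      obtain rfl : b = e := by simpa using he
      exact hen₂ b (by rw [List.concat_eq_append, List.getLast?_concat]; rfl)
  · intro h
    rw [List.append_eq_nil_iff] at h
    rw [hemp₁ h.1, hemp₂ h.2]

lemma CF_eqvgen_walk (S : Set G.E) (hSbar : ∀ e ∈ S, G.bar e ∈ S) {u v : G.V}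
    (h : Relation.EqvGen (fun a b => ∃ e ∈ S, G.ι e = a ∧ G.τ e = b) u v) :
    ∃ q, CFWalk G S u v q := by
  induction h with
  | rel a b hab =>
    obtain ⟨e, heS, hι, hτ⟩ := hab
    refine ⟨[e], List.isChain_singleton e, by simpa using heS, ?_, ?_, by simp⟩
    · intro x hx
      have hxe : e = x := by simpa using hx
      rw [← hxe]; exact hι
    · intro x hx
      have hxe : e = x := by simpa using hx
      rw [← hxe]; exact hτ
  | refl a => exact ⟨[], List.isChain_nil, by simp, by simp [StartsAt], by simp [EndsAt], fun _ => rfl⟩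
  | symm a b _ ih =>
    obtain ⟨q, hq⟩ := ih
    exact ⟨_, CF_walk_symm G S hSbar hq⟩
  | trans a b c _ _ ih₁ ih₂ =>
    obtain ⟨q₁, hq₁⟩ := ih₁
    obtain ⟨q₂, hq₂⟩ := ih₂
    exact ⟨_, CF_walk_trans G S hq₁ hq₂⟩

lemma CF_not_nb_decomp :
    ∀ q : List G.E, ¬ q.Chain' (fun e e' => e' ≠ G.bar e) →
      ∃ l₁ e l₂, q = l₁ ++ e :: G.bar e :: l₂ := by
  intro q
  induction q with
  | nil => intro h; exact absurd List.isChain_nil h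
  | cons a t ih =>
    intro h
    cases t with
    | nil => exact absurd (List.isChain_singleton a) h
    | cons b t' =>
      rw [List.Chain', List.isChain_cons_cons] at h
      by_cases hab : b ≠ G.bar a
      · obtain ⟨l₁, e, l₂, hdec⟩ := ih (fun hc => h ⟨hab, hc⟩)
        exact ⟨a :: l₁, e, l₂, by rw [hdec]; rfl⟩
      · push_neg at hab
        exact ⟨[], a, t', by simp [hab]⟩

lemma CF_walk_delete (S : Set G.E) {u v : G.V} (l₁ l₂ : List G.E) (e : G.E)
    (hw : CFWalk G S u v (l₁ ++ e :: G.bar e :: l₂)) : CFWalk G S u v (l₁ ++ l₂) := by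
  obtain ⟨hpath, hS, hst, hen, _⟩ := hw
  obtain ⟨hp₁, hp₂, hj⟩ := List.isChain_append.mp hpath
  have hp₂' : IsPath G l₂ := hp₂.tail.tail
  have hl₂head : ∀ y ∈ l₂.head?, G.ι y = G.ι e := by
    intro y hy
    have := (List.isChain_cons.mp (hp₂.tail)).1
    have h2 := this y hy
    rw [CF_tau_bar] at h2
    exact h2.symm
  have hιe : ∀ x ∈ l₁.getLast?, G.τ x = G.ι e := by
    intro x hx
    exact hj x hx e (by simp)
  refine ⟨?_, ?_, ?_, ?_, ?_⟩
  · exact List.isChain_append.mpr ⟨hp₁, hp₂', fun x hx y hy => by rw [hιe x hx, hl₂head y hy]⟩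
  · intro x hx
    apply hS
    rcases List.mem_append.mp hx with h | h
    · exact List.mem_append.mpr (Or.inl h)
    · exact List.mem_append.mpr (Or.inr (by simp [h]))
  · intro x hx
    cases l₁ with
    | nil =>
      rw [List.nil_append] at hx
      have hu : G.ι e = u := hst e (by simp)
      rw [hl₂head x hx, hu]
    | cons a t =>
      rw [List.head?_append_of_ne_nil _ (by simp)] at hx
      apply hst
      rw [List.head?_append_of_ne_nil _ (by simp)]
      exact hx
  · intro x hx
    rcases List.eq_nil_or_concat l₂ with rfl | ⟨t, b, rfl⟩
    · have hv : G.τ (G.bar e) = v := hen (G.bar e) (by rw [List.getLast?_append_of_ne_nil _ (by simp)]; simp)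
      rw [List.append_nil] at hx
      rw [CF_tau_bar] at hv
      rw [hιe x hx, hv]
    · rw [List.concat_eq_append, ← List.append_assoc, List.getLast?_concat] at hx
      obtain rfl : b = x := by simpa using hx
      apply hen
      rw [List.getLast?_append_of_ne_nil _ (by simp), List.concat_eq_append,
        show e :: G.bar e :: (t ++ [b]) = (e :: G.bar e :: t) ++ [b] from by simp,
        List.getLast?_concat]
      rfl
  · intro h
    rw [List.append_eq_nil_iff] at h
    obtain ⟨rfl, rfl⟩ := h
    have hu : G.ι e = u := hst e (by simp)
    have hv : G.τ (G.bar e) = v := hen (G.bar e) (by simp [List.getLast?_concat])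
    rw [CF_tau_bar] at hv
    rw [← hu, ← hv]

lemma CF_walk_reduce (S : Set G.E) :
    ∀ (n : ℕ) (q : List G.E), q.length ≤ n → ∀ u v, CFWalk G S u v q →
      ∃ q', CFWalk G S u v q' ∧ q'.Chain' (fun e e' => e' ≠ G.bar e) := by
  intro n
  induction n with
  | zero =>
    intro q hq u v hw
    rw [Nat.le_zero, List.length_eq_zero_iff] at hq
    subst hq
    exact ⟨[], hw, List.isChain_nil⟩
  | succ n ih =>
    intro q hq u v hw
    by_cases h : q.Chain' (fun e e' => e' ≠ G.bar e)
    · exact ⟨q, hw, h⟩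
    · obtain ⟨l₁, e, l₂, rfl⟩ := CF_not_nb_decomp G q h
      apply ih (l₁ ++ l₂)
        (by simp only [List.length_append, List.length_cons] at hq ⊢; omega) u v
      exact CF_walk_delete G S l₁ l₂ e hw

lemma CF_filterMap_ne_decomp {α β : Type*} (g : α → Option β) (l : List α)
    (h : l.filterMap g ≠ []) :
    ∃ m x t y, l = m ++ x :: t ∧ (∀ e ∈ m, g e = none) ∧ g x = some y ∧
      (l.filterMap g).head? = some y := by
  rcases List.exists_cons_of_ne_nil h with ⟨y, t', ht⟩
  obtain ⟨m, x, t, hdec, hm, hx⟩ := CF_filterMap_head_decomp g l y (by rw [ht]; rfl)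
  exact ⟨m, x, t, y, hdec, hm, hx, by rw [ht]; rfl⟩

end Aux

open Classical in
/-- Let `f : Γ → Γ` be an immersion of a finite graph and `S` a maximal nontrivial
`f`-invariant forest. Let `Γ'` be the graph obtained by collapsing each component of `S`
to a point (vertices of `Γ'` are classes of vertices of `Γ` joined by forest paths, edges
of `Γ'` are the non-forest edges), and let `f'` be the induced map (the image of a
non-forest edge is its `f`-image with the forest edges deleted). Then `f'` is again an
immersion. -/
theorem collapse_of_invariant_forest_immersion (G : CGraph) (F : GMap G)
    (hF : IsImmersion G F)
    (S : Set G.E) (hSne : S.Nonempty) (hSbar : ∀ e ∈ S, G.bar e ∈ S)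
    (hSforest : ¬ ∃ l : List G.E, l ≠ [] ∧ (∀ e ∈ l, e ∈ S) ∧
      IsCircuit G l ∧ IsCyclicallyReduced G l)
    (hSinv : ∀ e ∈ S, ∀ e' ∈ F.emap e, e' ∈ S)
    (hSmax : ∀ T : Set G.E, S ⊆ T → (∀ e ∈ T, G.bar e ∈ T) →
      (∀ e ∈ T, ∀ e' ∈ F.emap e, e' ∈ T) →
      (¬ ∃ l : List G.E, l ≠ [] ∧ (∀ e ∈ l, e ∈ T) ∧
        IsCircuit G l ∧ IsCyclicallyReduced G l) → T = S)
    (G' : CGraph) (F' : GMap G')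
    (πV : G.V → G'.V) (πE : {e : G.E // e ∉ S} → G'.E)
    (hπV : Function.Surjective πV) (hπE : Function.Bijective πE)
    (hcollapse : ∀ u v : G.V, πV u = πV v ↔
      Relation.EqvGen (fun a b => ∃ e ∈ S, G.ι e = a ∧ G.τ e = b) u v)
    (hι : ∀ e : {e : G.E // e ∉ S}, G'.ι (πE e) = πV (G.ι e.1))
    (hbar : ∀ (e : {e : G.E // e ∉ S}) (h : G.bar e.1 ∉ S),
      G'.bar (πE e) = πE ⟨G.bar e.1, h⟩)
    (hvmap : ∀ v : G.V, F'.vmap (πV v) = πV (F.vmap v))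
    (hemap : ∀ e : {e : G.E // e ∉ S},
      F'.emap (πE e) = (F.emap e.1).filterMap fun a =>
        if h : a ∈ S then none else some (πE ⟨a, h⟩)) :
    IsImmersion G' F' := by
  classical
  have hseg := CF_no_S_segment G S hSforest
  have notS_bar : ∀ {x : G.E}, x ∉ S → G.bar x ∉ S := by
    intro x hx hbx
    exact hx (by rw [← G.bar_bar x]; exact hSbar _ hbx)
  constructor
  · -- every edge of the collapsed graph maps to a reduced path
    intro e'
    obtain ⟨ee, rfl⟩ := hπE.2 e'
    refine ⟨F'.emap_path _, ?_⟩
    rw [hemap]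
    apply CF_chain'_filterMap
    intro l₁ m t x y bx b_y hdec hgx hm hgy hcon
    by_cases hx : x ∈ S
    · rw [dif_pos hx] at hgx; exact nomatch hgx
    rw [dif_neg hx] at hgx
    by_cases hy : y ∈ S
    · rw [dif_pos hy] at hgy; exact nomatch hgy
    rw [dif_neg hy] at hgy
    have hmS : ∀ e ∈ m, e ∈ S := by
      intro e he
      by_contra hc
      have h2 := hm e he
      rw [dif_neg hc] at h2
      exact nomatch h2
    obtain rfl : πE ⟨x, hx⟩ = bx := Option.some_inj.mp hgx
    obtain rfl : πE ⟨y, hy⟩ = b_y := Option.some_inj.mp hgy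
    rw [hbar ⟨x, hx⟩ (notS_bar hx)] at hcon
    have hyx : y = G.bar x := congrArg Subtype.val (hπE.1 hcon)
    rw [hyx] at hdec
    refine hseg l₁ m t x ?_ hmS
    have h4 := hF.1 ee.1
    rw [hdec] at h4
    have h5 : l₁ ++ x :: (m ++ G.bar x :: t) = l₁ ++ x :: m ++ G.bar x :: t := by simp
    rwa [h5] at h4
  · -- injectivity of the derivative maps
    intro x₁ x₂ hι12 hh
    obtain ⟨⟨e₁, he₁⟩, rfl⟩ := hπE.2 x₁
    obtain ⟨⟨e₂, he₂⟩, rfl⟩ := hπE.2 x₂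
    by_cases heq : e₁ = e₂
    · subst heq; rfl
    exfalso
    -- a reduced S-walk between the initial vertices
    have hVeq : πV (G.ι e₁) = πV (G.ι e₂) := by
      rw [← hι ⟨e₁, he₁⟩, ← hι ⟨e₂, he₂⟩]; exact hι12
    obtain ⟨q0, hq0⟩ := CF_eqvgen_walk G S hSbar ((hcollapse _ _).mp hVeq)
    obtain ⟨q, hq, hqred⟩ := CF_walk_reduce G S q0.length q0 le_rfl _ _ hq0
    obtain ⟨hqpath, hqS, hqst, hqen, hqemp⟩ := hq
    -- decompose the images of e₁, e₂ at their first non-forest edge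
    have h1 := F'.emap_ne (πE ⟨e₁, he₁⟩)
    have h2 := F'.emap_ne (πE ⟨e₂, he₂⟩)
    rw [hemap ⟨e₁, he₁⟩] at h1 hh
    rw [hemap ⟨e₂, he₂⟩] at h2 hh
    obtain ⟨p₁, a₁, r₁, y₁, hdec₁, hp₁, hga₁, hhead₁⟩ := CF_filterMap_ne_decomp _ _ h1
    obtain ⟨p₂, a₂, r₂, y₂, hdec₂, hp₂, hga₂, hhead₂⟩ := CF_filterMap_ne_decomp _ _ h2
    rw [hh] at hhead₁
    have hy12 : y₁ = y₂ := Option.some_inj.mp (hhead₁.symm.trans hhead₂)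
    have hx₁ : a₁ ∉ S := by
      intro hc; rw [dif_pos hc] at hga₁; exact nomatch hga₁
    have hx₂ : a₂ ∉ S := by
      intro hc; rw [dif_pos hc] at hga₂; exact nomatch hga₂
    rw [dif_neg hx₁] at hga₁
    rw [dif_neg hx₂] at hga₂
    obtain rfl : a₁ = a₂ := by
      have h3 : πE ⟨a₁, hx₁⟩ = πE ⟨a₂, hx₂⟩ := by
        rw [Option.some_inj] at hga₁ hga₂
        rw [hga₁, hga₂, hy12]
      exact congrArg Subtype.val (hπE.1 h3)
    have hpS₁ : ∀ e ∈ p₁, e ∈ S := by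
      intro e he; by_contra hc
      have h3 := hp₁ e he; rw [dif_neg hc] at h3; exact nomatch h3
    have hpS₂ : ∀ e ∈ p₂, e ∈ S := by
      intro e he; by_contra hc
      have h3 := hp₂ e he; rw [dif_neg hc] at h3; exact nomatch h3
    -- the reduced path  ē₁ q e₂
    have hγred : IsReduced G (G.bar e₁ :: (q ++ [e₂])) := by
      constructor
      · apply List.isChain_cons.mpr
        constructor
        · intro y hy
          cases q with
          | nil =>
            obtain rfl : e₂ = y := by simpa using hy
            rw [CF_tau_bar]
            exact hqemp rfl
          | cons c t =>
            obtain rfl : c = y := by simpa using hy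
            rw [CF_tau_bar]
            exact (hqst c (by simp)).symm
        · apply List.isChain_append.mpr
          refine ⟨hqpath, List.isChain_singleton _, ?_⟩
          intro x hx y hy
          obtain rfl : e₂ = y := by simpa using hy
          exact hqen x hx
      · apply List.isChain_cons.mpr
        constructor
        · intro y hy hcon
          rw [G.bar_bar] at hcon
          cases q with
          | nil =>
            obtain rfl : e₂ = y := by simpa using hy
            exact heq hcon.symm
          | cons c t =>
            obtain rfl : c = y := by simpa using hy
            exact he₁ (hcon ▸ hqS c (by simp))
        · apply List.isChain_append.mpr
          refine ⟨hqred, List.isChain_singleton _, ?_⟩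
          intro x hx y hy hcon
          obtain rfl : e₂ = y := by simpa using hy
          apply he₂
          rw [hcon]
          rcases List.eq_nil_or_concat q with rfl | ⟨t, b, rfl⟩
          · simp at hx
          · rw [List.concat_eq_append, List.getLast?_concat] at hx
            obtain rfl : b = x := by simpa using hx
            exact hSbar b (hqS b (by simp [List.concat_eq_append]))
    have hFγ := CF_onPaths_reduced G F hF (G.bar e₁ :: (q ++ [e₂])) hγred
    have hexp : onPaths G F (G.bar e₁ :: (q ++ [e₂])) =
        (r₁.map G.bar).reverse ++ G.bar a₁ ::
          ((p₁.map G.bar).reverse ++ (onPaths G F q ++ p₂)) ++ G.bar (G.bar a₁) :: r₂ := by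
      rw [G.bar_bar]
      simp only [onPaths, List.flatMap_cons, List.flatMap_append, List.flatMap_nil,
        List.append_nil, F.emap_bar, hdec₁, hdec₂, List.map_append, List.map_cons,
        List.reverse_append, List.reverse_cons, List.append_assoc, List.cons_append,
        List.nil_append, List.singleton_append]
    rw [hexp] at hFγ
    refine hseg ((r₁.map G.bar).reverse)
      ((p₁.map G.bar).reverse ++ (onPaths G F q ++ p₂)) r₂ (G.bar a₁) hFγ ?_
    intro e he
    simp only [List.mem_append, List.mem_reverse, List.mem_map] at he
    rcases he with ⟨e', he', rfl⟩ | he | he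
    · exact hSbar e' (hpS₁ e' he')
    · obtain ⟨x, hxq, hxe⟩ := List.mem_flatMap.mp he
      exact hSinv x (hqS x hxq) e hxe
    · exact hpS₂ e he
end

section
/- Let F_2 = ⟨a,b⟩ and φ : F_2 → F_2 the Sapir endomorphism φ(a) = ab, φ(b) = ba. Then for all k, d ≥ 1 and every nontrivial g ∈ F_2, φ^k(g) is not conjugate to g^d in F_2. -/
/-- The Sapir endomorphism of `F₂ = ⟨a, b⟩` (with `a = of true`, `b = of false`):
`φ(a) = ab`, `φ(b) = ba`. -/
noncomputable def sapir : Monoid.End (FreeGroup Bool) :=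
  FreeGroup.lift fun x =>
    if x then FreeGroup.of true * FreeGroup.of false
    else FreeGroup.of false * FreeGroup.of true

namespace SapirProof


abbrev Ltr := Bool × Bool

/-- inverse of a letter -/
def linv (x : Ltr) : Ltr := (x.1, !x.2)

lemma linv_linv (x : Ltr) : linv (linv x) = x := by simp [linv]

/-- relation: `y` is not the cancelling letter after `x` -/
def Rel (x y : Ltr) : Prop := ¬(x.1 = y.1 ∧ x.2 = !y.2)

lemma rel_comm {x y : Ltr} : Rel x y ↔ Rel y x := by
  constructor <;> (intro h hc; exact h ⟨hc.1.symm, by simp [hc.2]⟩)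

lemma rel_iff {x y : Ltr} : Rel x y ↔ y ≠ linv x := by
  constructor
  · rintro h rfl; exact h ⟨rfl, by simp [linv]⟩
  · intro h hc
    apply h
    obtain ⟨x1,x2⟩ := x; obtain ⟨y1,y2⟩ := y
    obtain ⟨h1,h2⟩ := hc
    simp only at h1 h2
    subst h1; subst h2
    simp [linv]

def Reduced (L : List Ltr) : Prop := L.Chain' Rel

lemma Reduced.nil : Reduced [] := List.isChain_nil

lemma reduce_eq_self (L : List Ltr) (h : Reduced L) : FreeGroup.reduce L = L := by
  induction L with
  | nil => rfl
  | cons x L ih =>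
    rw [FreeGroup.reduce.cons, ih h.tail]
    cases L with
    | nil => rfl
    | cons hd tl =>
      have hrel : Rel x hd := (List.isChain_cons_cons.1 h).1
      simp only [Rel] at hrel
      simp [hrel]

lemma reduced_reduce (L : List Ltr) : Reduced (FreeGroup.reduce L) := by
  induction L with
  | nil => exact List.isChain_nil
  | cons x L ih =>
    rw [FreeGroup.reduce.cons]
    rcases h : FreeGroup.reduce L with _ | ⟨hd, tl⟩
    · exact List.isChain_singleton x
    · rw [h] at ih
      by_cases hc : x.1 = hd.1 ∧ x.2 = !hd.2
      · simp only [hc, and_self, if_true]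
        exact ih.tail
      · simp only [hc, if_false]
        exact List.isChain_cons_cons.2 ⟨hc, ih⟩

lemma toWord_mk_reduced {L : List Ltr} (h : Reduced L) :
    (FreeGroup.mk L).toWord = L := by
  rw [FreeGroup.toWord_mk, reduce_eq_self L h]

lemma Reduced.infix {L M : List Ltr} (h : Reduced M) (hinf : L <:+: M) : Reduced L :=
  List.IsChain.infix h hinf

/-- cyclically reduced -/
def CycReduced (L : List Ltr) : Prop := Reduced (L ++ L)

lemma CycReduced.reduced {L : List Ltr} (h : CycReduced L) : Reduced L :=
  h.infix ⟨[], L, by simp⟩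

lemma CycReduced.nil : CycReduced ([] : List Ltr) := by simp [CycReduced, Reduced, List.Chain']





open FreeGroup List

-- invRev lemmas
lemma invRev_cons (y : Ltr) (p : List Ltr) :
    invRev (y :: p) = invRev p ++ [linv y] := by
  simp [invRev, linv]

lemma invRev_nil : invRev ([] : List Ltr) = [] := rfl

lemma invRev_singleton (x : Ltr) : invRev [x] = [linv x] := by
  simp [invRev, linv]

-- mk cancellation lemmas
lemma mk_cons_cancel (x : Ltr) (L : List Ltr) :
    FreeGroup.mk (x :: linv x :: L) = FreeGroup.mk L := by
  obtain ⟨a, b⟩ := x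
  exact Quot.sound (FreeGroup.Red.Step.cons_not)

lemma mk_append_cancel (L₁ : List Ltr) (x : Ltr) (L₂ : List Ltr) :
    FreeGroup.mk (L₁ ++ x :: linv x :: L₂) = FreeGroup.mk (L₁ ++ L₂) := by
  obtain ⟨a, b⟩ := x
  exact Quot.sound (FreeGroup.Red.Step.append_left FreeGroup.Red.Step.cons_not)


lemma rel_iff' {x y : Ltr} : Rel x y ↔ x ≠ linv y := by
  rw [rel_comm, rel_iff]

lemma linv_inj : Function.Injective linv := by
  intro x y h
  have := congrArg linv h
  rwa [linv_linv, linv_linv] at this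

lemma not_rel_self_linv (x : Ltr) : ¬ Rel x (linv x) := by
  rw [rel_iff]; simp

lemma reduced_append_iff {L M : List Ltr} :
    Reduced (L ++ M) ↔ Reduced L ∧ Reduced M ∧
      ∀ x ∈ L.getLast?, ∀ y ∈ M.head?, Rel x y :=
  List.isChain_append

/-- junction relation for a nonempty cyclically reduced word -/
lemma cycReduced_junction {L : List Ltr} (h : CycReduced L) :
    ∀ x ∈ L.getLast?, ∀ y ∈ L.head?, Rel x y :=
  (reduced_append_iff.1 h).2.2

lemma reduced_triple {L : List Ltr} (h : CycReduced L) : Reduced (L ++ L ++ L) := by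
  rcases eq_or_ne L [] with rfl | hne
  · exact List.isChain_nil
  have h' := reduced_append_iff.1 h
  rw [List.append_assoc]
  refine reduced_append_iff.2 ⟨h'.1, h, ?_⟩
  rw [List.head?_append_of_ne_nil _ hne]
  exact h'.2.2

lemma cycReduced_rotate {L : List Ltr} (h : CycReduced L) (n : ℕ) :
    CycReduced (L.rotate n) := by
  rcases eq_or_ne L [] with rfl | hne
  · simpa [List.rotate_nil] using h
  have hlt : n % L.length < L.length := Nat.mod_lt _ (List.length_pos_iff.2 hne)
  set s := n % L.length with hs
  obtain ⟨A, B, hAB, hrot⟩ : ∃ A B, A ++ B = L ∧ L.rotate n = B ++ A :=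
    ⟨L.take s, L.drop s, List.take_append_drop s L, by
      rw [← List.rotate_mod, ← hs, List.rotate_eq_drop_append_take hlt.le]⟩
  have h'' : Reduced ((A++B) ++ (A++B) ++ (A++B)) := by rw [hAB]; exact reduced_triple h
  rw [CycReduced, hrot]
  exact List.IsChain.infix h'' ⟨A, B, by simp [List.append_assoc]⟩

lemma reduced_sandwich {x : Ltr} {M : List Ltr} (hM : Reduced M) (hMne : M ≠ [])
    (hhead : ∀ h ∈ M.head?, Rel x h) (hlast : ∀ l ∈ M.getLast?, Rel l (linv x)) :
    Reduced (x :: M ++ [linv x]) := by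
  have h1 : Reduced (x :: M) := List.isChain_cons.2 ⟨hhead, hM⟩
  refine reduced_append_iff.2 ⟨h1, List.isChain_singleton _, ?_⟩
  intro a ha b hb
  simp only [List.head?, Option.mem_def, Option.some.injEq] at hb
  subst hb
  rw [show x :: M = [x] ++ M from rfl, List.getLast?_append_of_ne_nil _ hMne] at ha
  exact hlast a ha

lemma CycReduced.reduced' {L : List Ltr} (h : CycReduced L) : Reduced L :=
  List.IsChain.infix h ⟨[], L, by simp⟩

lemma conj_letter (x : Ltr) (p w : List Ltr) (hw : CycReduced w) (hwne : w ≠ [])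
    (hred : Reduced (p ++ w ++ FreeGroup.invRev p)) :
    ∃ p' w', w ~r w' ∧ CycReduced w' ∧ w' ≠ [] ∧
      Reduced (p' ++ w' ++ FreeGroup.invRev p') ∧
      FreeGroup.mk [x] * FreeGroup.mk (p ++ w ++ FreeGroup.invRev p) * (FreeGroup.mk [x])⁻¹ =
        FreeGroup.mk (p' ++ w' ++ FreeGroup.invRev p') := by
  have hLHS : FreeGroup.mk [x] * FreeGroup.mk (p ++ w ++ FreeGroup.invRev p) *
        (FreeGroup.mk [x])⁻¹
      = FreeGroup.mk ([x] ++ (p ++ w ++ FreeGroup.invRev p) ++ [linv x]) := by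
    rw [FreeGroup.inv_mk, invRev_singleton, FreeGroup.mul_mk, FreeGroup.mul_mk]
  cases p with
  | cons y p' =>
    by_cases hxy : x = linv y
    · have hyx : y = linv x := by rw [hxy, linv_linv]
      refine ⟨p', w, IsRotated.refl w, hw, hwne, ?_, ?_⟩
      · exact hred.infix ⟨[y], [linv y], by rw [invRev_cons]; simp [List.append_assoc]⟩
      · rw [hLHS, invRev_cons]
        have e1 : [x] ++ ((y :: p') ++ w ++ (FreeGroup.invRev p' ++ [linv y])) ++ [linv x]
            = x :: linv x :: ((p' ++ w ++ FreeGroup.invRev p') ++ x :: linv x :: []) := by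
          rw [hyx, hxy, linv_linv]
          simp [List.append_assoc]
        rw [e1, mk_cons_cancel, mk_append_cancel]
        simp
    · -- no cancellation: grow p
      have hM : Reduced (x :: ((y :: p') ++ w ++ FreeGroup.invRev (y :: p')) ++ [linv x]) := by
        apply reduced_sandwich hred (by simp)
        · intro h' hh'
          simp only [List.cons_append, List.head?_cons, Option.mem_def,
            Option.some.injEq] at hh'
          subst hh'
          exact rel_iff'.2 hxy
        · intro l hl
          rw [invRev_cons, ← List.append_assoc,
            List.getLast?_append_of_ne_nil _ (by simp)] at hl
          simp only [List.getLast?_singleton, Option.mem_def, Option.some.injEq] at hl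
          subst hl
          rw [rel_iff, linv_linv]
          intro hcon
          exact hxy (by rw [← hcon, linv_linv])
      refine ⟨x :: (y :: p'), w, IsRotated.refl w, hw, hwne, ?_, ?_⟩
      · rw [invRev_cons]
        have e : (x :: (y :: p')) ++ w ++ (FreeGroup.invRev (y :: p') ++ [linv x])
            = x :: ((y :: p') ++ w ++ FreeGroup.invRev (y :: p')) ++ [linv x] := by
          simp [List.append_assoc]
        rw [e]; exact hM
      · rw [hLHS, invRev_cons]
        congr 1
        simp [invRev_cons, List.append_assoc]
  | nil =>
    cases w with
    | nil => exact absurd rfl hwne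
    | cons h t =>
      by_cases hh : h = linv x
      · -- cancellation at the front: rotate left
        refine ⟨[], (h :: t).rotate 1, ⟨1, rfl⟩, cycReduced_rotate hw 1, by simp, ?_, ?_⟩
        · simpa using (cycReduced_rotate hw 1).reduced'
        · rw [hLHS]
          have e : [x] ++ ([] ++ (h :: t) ++ FreeGroup.invRev []) ++ [linv x]
              = x :: linv x :: (t ++ [linv x]) := by
            rw [hh]; simp [FreeGroup.invRev]
          rw [e, mk_cons_cancel]
          have e2 : (h :: t).rotate 1 = t ++ [linv x] := by
            rw [List.rotate_cons_succ, List.rotate_zero, hh]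
          rw [e2]; simp [FreeGroup.invRev]
      · by_cases hl : (h :: t).getLast (by simp) = x
        · -- cancellation at the back: rotate right
          have hdec : (h :: t).dropLast ++ [x] = h :: t := by
            conv_rhs => rw [← List.dropLast_append_getLast (l := h :: t) (by simp)]
            rw [hl]
          set t' := (h :: t).dropLast with ht'
          refine ⟨[], (h :: t).rotate t'.length, ⟨t'.length, rfl⟩,
            cycReduced_rotate hw _, by simp, ?_, ?_⟩
          · simpa using (cycReduced_rotate hw t'.length).reduced'
          · rw [hLHS]
            have e : [x] ++ ([] ++ (h :: t) ++ FreeGroup.invRev []) ++ [linv x]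
                = (x :: t') ++ (x :: linv x :: []) := by
              rw [← hdec]; simp [FreeGroup.invRev, List.append_assoc]
            rw [e, mk_append_cancel]
            have e2 : (h :: t).rotate t'.length = x :: t' := by
              rw [← hdec, List.rotate_append_length_eq]; rfl
            rw [e2]; simp [FreeGroup.invRev]
        · -- no cancellation
          have hM : Reduced (x :: ((h :: t)) ++ [linv x]) := by
            apply reduced_sandwich hw.reduced' (by simp)
            · intro h' hh'
              simp only [List.head?_cons, Option.mem_def, Option.some.injEq] at hh'
              subst hh'
              exact rel_iff.2 hh
            · intro l hlmem
              rw [List.getLast?_eq_getLast (l := h :: t) (by simp)] at hlmem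
              simp only [Option.mem_def, Option.some.injEq] at hlmem
              subst hlmem
              rw [rel_iff]
              intro hcon; exact hl (linv_inj hcon).symm
          refine ⟨[x], h :: t, IsRotated.refl _, hw, by simp, ?_, ?_⟩
          · rw [invRev_singleton]
            have e : [x] ++ (h :: t) ++ [linv x] = x :: (h :: t) ++ [linv x] := by simp
            rw [e]; exact hM
          · rw [hLHS, invRev_singleton]
            congr 1
            simp [FreeGroup.invRev]

lemma conj_structure (c w : List Ltr) (hw : CycReduced w) (hwne : w ≠ []) :
    ∃ p w', w ~r w' ∧ CycReduced w' ∧ w' ≠ [] ∧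
      Reduced (p ++ w' ++ FreeGroup.invRev p) ∧
      FreeGroup.mk c * FreeGroup.mk w * (FreeGroup.mk c)⁻¹ =
        FreeGroup.mk (p ++ w' ++ FreeGroup.invRev p) := by
  induction c with
  | nil =>
    refine ⟨[], w, IsRotated.refl w, hw, hwne, by simpa using hw.reduced', ?_⟩
    simp [FreeGroup.mul_mk, FreeGroup.inv_mk, FreeGroup.invRev]
  | cons x c' ih =>
    obtain ⟨p, w', hr, hcr, hne, hred, heq⟩ := ih
    obtain ⟨p2, w2, hr2, hcr2, hne2, hred2, heq2⟩ := conj_letter x p w' hcr hne hred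
    refine ⟨p2, w2, hr.trans hr2, hcr2, hne2, hred2, ?_⟩
    have hc : FreeGroup.mk (x :: c') = FreeGroup.mk [x] * FreeGroup.mk c' := by
      rw [FreeGroup.mul_mk]; rfl
    calc FreeGroup.mk (x :: c') * FreeGroup.mk w * (FreeGroup.mk (x :: c'))⁻¹
        = FreeGroup.mk [x] * (FreeGroup.mk c' * FreeGroup.mk w * (FreeGroup.mk c')⁻¹) *
            (FreeGroup.mk [x])⁻¹ := by rw [hc, mul_inv_rev]; group
      _ = FreeGroup.mk [x] * FreeGroup.mk (p ++ w' ++ FreeGroup.invRev p) *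
            (FreeGroup.mk [x])⁻¹ := by rw [heq]
      _ = FreeGroup.mk (p2 ++ w2 ++ FreeGroup.invRev p2) := heq2

lemma isConj_cycReduced {w v : List Ltr} (hw : CycReduced w) (hv : CycReduced v)
    (hwne : w ≠ []) (h : IsConj (FreeGroup.mk w) (FreeGroup.mk v)) : w ~r v := by
  rw [isConj_iff] at h
  obtain ⟨c, hc⟩ := h
  obtain ⟨p, w', hr, hcr', hne', hred, heq⟩ := conj_structure c.toWord w hw hwne
  rw [FreeGroup.mk_toWord, hc] at heq
  have hv' : v = p ++ w' ++ FreeGroup.invRev p := by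
    have h2 := congrArg FreeGroup.toWord heq
    rwa [toWord_mk_reduced hv.reduced', toWord_mk_reduced hred] at h2
  cases p with
  | nil =>
    have : v = w' := by simpa [FreeGroup.invRev] using hv'
    rw [this]; exact hr
  | cons y p' =>
    exfalso
    rw [invRev_cons] at hv'
    have h1 : v.head? = some y := by rw [hv']; simp
    have h2 : v.getLast? = some (linv y) := by
      rw [hv']
      have e : (y :: p') ++ w' ++ (FreeGroup.invRev p' ++ [linv y])
          = ((y :: p') ++ w' ++ FreeGroup.invRev p') ++ [linv y] := by
        simp [List.append_assoc]
      rw [e, List.getLast?_concat]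
    have hrel := cycReduced_junction hv _ h2 _ h1
    rw [rel_iff, linv_linv] at hrel
    exact hrel rfl

/-! ### The substitution on words -/

def blk (x : Ltr) : List Ltr :=
  if x.2 then [(x.1, true), (!x.1, true)] else [(!x.1, false), (x.1, false)]

def Phi (L : List Ltr) : List Ltr := L.flatMap blk

lemma Phi_nil : Phi [] = [] := rfl

lemma Phi_cons (x : Ltr) (L : List Ltr) : Phi (x :: L) = blk x ++ Phi L := rfl

lemma Phi_append (L M : List Ltr) : Phi (L ++ M) = Phi L ++ Phi M :=
  List.flatMap_append (xs := L) (ys := M) (f := blk)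

lemma length_Phi (L : List Ltr) : (Phi L).length = 2 * L.length := by
  induction L with
  | nil => rfl
  | cons x L ih =>
    rw [Phi_cons, List.length_append, ih, List.length_cons]
    have : (blk x).length = 2 := by
      unfold blk; rcases x with ⟨a, _ | _⟩ <;> simp
    omega

instance relDecidable (x y : Ltr) : Decidable (Rel x y) :=
  inferInstanceAs (Decidable (¬(x.1 = y.1 ∧ x.2 = !y.2)))

lemma of_eq_mk (c : Bool) : (FreeGroup.of c : FreeGroup Bool) = FreeGroup.mk [(c, true)] := rfl

lemma ofinv_eq_mk (c : Bool) :
    (FreeGroup.of c : FreeGroup Bool)⁻¹ = FreeGroup.mk [(c, false)] := by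
  rw [of_eq_mk, FreeGroup.inv_mk]; rfl

lemma sapir_of (a : Bool) : sapir (FreeGroup.of a) = FreeGroup.mk (blk (a, true)) := by
  unfold sapir
  erw [FreeGroup.lift_apply_of]
  cases a <;> simp [of_eq_mk, FreeGroup.mul_mk, blk]

lemma sapir_of_inv (a : Bool) :
    sapir ((FreeGroup.of a)⁻¹) = FreeGroup.mk (blk (a, false)) := by
  rw [_root_.map_inv sapir (FreeGroup.of a)]
  unfold sapir
  erw [FreeGroup.lift_apply_of]
  cases a <;>
    simp [mul_inv_rev, ofinv_eq_mk, FreeGroup.mul_mk, blk]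

lemma sapir_mk_single (x : Ltr) :
    sapir (FreeGroup.mk [x]) = FreeGroup.mk (blk x) := by
  rcases x with ⟨a, b⟩
  cases b
  · rw [← ofinv_eq_mk]; exact sapir_of_inv a
  · rw [← of_eq_mk]; exact sapir_of a

lemma sapir_mk (L : List Ltr) : sapir (FreeGroup.mk L) = FreeGroup.mk (Phi L) := by
  induction L with
  | nil =>
    rw [show (FreeGroup.mk [] : FreeGroup Bool) = 1 from rfl, _root_.map_one sapir, Phi_nil]
    rfl
  | cons x L ih =>
    rw [show FreeGroup.mk (x :: L) = FreeGroup.mk [x] * FreeGroup.mk L by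
      rw [FreeGroup.mul_mk]; rfl, _root_.map_mul sapir _ _, ih, sapir_mk_single, Phi_cons,
      FreeGroup.mul_mk]

lemma sapir_pow_mk (k : ℕ) (L : List Ltr) :
    (sapir ^ k) (FreeGroup.mk L) = FreeGroup.mk (Phi^[k] L) := by
  induction k generalizing L with
  | zero => rfl
  | succ k ih =>
    rw [pow_succ]
    show (sapir ^ k) (sapir (FreeGroup.mk L)) = _
    rw [sapir_mk, ih, Function.iterate_succ_apply]

lemma blk_reduced (x : Ltr) : Reduced (blk x) := by
  rcases x with ⟨a, b⟩
  cases a <;> cases b <;> simp [Reduced, blk, List.Chain', List.isChain_cons_cons, Rel]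

lemma blk_junction : ∀ x y : Ltr, Rel x y →
    ∀ a ∈ (blk x).getLast?, ∀ b ∈ (blk y).head?, Rel a b := by
  rintro ⟨a0, b0⟩ ⟨a1, b1⟩ h
  cases a0 <;> cases b0 <;> cases a1 <;> cases b1 <;> simp_all [blk, Rel]

lemma blk_ne_nil (x : Ltr) : blk x ≠ [] := by
  unfold blk; rcases x with ⟨a, _ | _⟩ <;> simp

lemma reduced_Phi {L : List Ltr} (h : Reduced L) : Reduced (Phi L) := by
  induction L with
  | nil => exact List.isChain_nil
  | cons x L ih =>
    rw [Phi_cons]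
    refine reduced_append_iff.2 ⟨blk_reduced x, ih h.tail, ?_⟩
    intro a ha b hb
    cases L with
    | nil => simp [Phi_nil] at hb
    | cons y L' =>
      rw [Phi_cons] at hb
      rw [List.head?_append_of_ne_nil _ (blk_ne_nil y)] at hb
      exact blk_junction x y (List.isChain_cons_cons.1 h).1 a ha b hb

lemma cycReduced_Phi {L : List Ltr} (h : CycReduced L) : CycReduced (Phi L) := by
  unfold CycReduced
  rw [← Phi_append]
  exact reduced_Phi h

lemma cycReduced_PhiK {L : List Ltr} (h : CycReduced L) (k : ℕ) :
    CycReduced (Phi^[k] L) := by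
  induction k with
  | zero => exact h
  | succ k ih => rw [Function.iterate_succ_apply']; exact cycReduced_Phi ih

lemma length_PhiK (L : List Ltr) (k : ℕ) : (Phi^[k] L).length = 2 ^ k * L.length := by
  induction k with
  | zero => simp
  | succ k ih =>
    rw [Function.iterate_succ_apply', length_Phi, ih, pow_succ]
    ring

/-! ### Powers -/

def rep (d : ℕ) (L : List Ltr) : List Ltr := (List.replicate d L).flatten

lemma rep_zero (L : List Ltr) : rep 0 L = [] := rfl

lemma rep_succ (d : ℕ) (L : List Ltr) : rep (d + 1) L = L ++ rep d L := by
  unfold rep; rw [List.replicate_succ, List.flatten_cons]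

lemma length_rep (d : ℕ) (L : List Ltr) : (rep d L).length = d * L.length := by
  induction d with
  | zero => simp [rep_zero]
  | succ d ih => rw [rep_succ, List.length_append, ih]; ring

lemma head?_rep {L : List Ltr} (hL : L ≠ []) (d : ℕ) (hd : d ≠ 0) :
    (rep d L).head? = L.head? := by
  cases d with
  | zero => exact absurd rfl hd
  | succ d => rw [rep_succ, List.head?_append_of_ne_nil _ hL]

lemma reduced_rep {L : List Ltr} (h : CycReduced L) (d : ℕ) : Reduced (rep d L) := by
  induction d with
  | zero => exact List.isChain_nil
  | succ d ih =>
    rw [rep_succ]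
    refine reduced_append_iff.2 ⟨h.reduced', ih, ?_⟩
    intro a ha b hb
    rcases eq_or_ne L [] with rfl | hne
    · simp at ha
    cases d with
    | zero => simp [rep_zero] at hb
    | succ d =>
      rw [head?_rep hne _ (Nat.succ_ne_zero d)] at hb
      exact cycReduced_junction h a ha b hb

lemma cycReduced_rep {L : List Ltr} (h : CycReduced L) (d : ℕ) : CycReduced (rep d L) := by
  unfold CycReduced
  have : rep d L ++ rep d L = rep (d + d) L := by
    unfold rep
    rw [← List.flatten_append, ← List.replicate_add]
  rw [this]
  exact reduced_rep h _

/-! ### Linear and cyclic sign-change counts on `List Bool` -/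

def lsc : List Bool → ℕ
  | [] => 0
  | [_] => 0
  | x :: y :: t => (if x = y then 0 else 1) + lsc (y :: t)

lemma lsc_nil : lsc [] = 0 := rfl
lemma lsc_single (x : Bool) : lsc [x] = 0 := rfl
lemma lsc_cons_cons (x y : Bool) (t : List Bool) :
    lsc (x :: y :: t) = (if x = y then 0 else 1) + lsc (y :: t) := rfl

lemma lsc_concat_concat (M : List Bool) (c d : Bool) :
    lsc (M ++ [c, d]) = lsc (M ++ [c]) + (if c = d then 0 else 1) := by
  induction M with
  | nil => simp [lsc_cons_cons, lsc_single]
  | cons a M ih =>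
    cases M with
    | nil => simp [lsc_cons_cons, lsc_single]
    | cons b t =>
      simp only [List.cons_append] at ih ⊢
      rw [lsc_cons_cons, ih, lsc_cons_cons]
      ring

lemma lsc_split (A B : List Bool) (h : Bool) (hB : B.head? = some h) :
    lsc (A ++ B) = lsc (A ++ [h]) + lsc B := by
  induction A with
  | nil =>
    cases B with
    | nil => simp at hB
    | cons b t =>
      simp only [List.head?_cons, Option.some.injEq] at hB
      subst hB
      simp [lsc_single]
  | cons a A ih =>
    cases A with
    | nil =>
      cases B with
      | nil => simp at hB
      | cons b t =>
        simp only [List.head?_cons, Option.some.injEq] at hB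
        subst hB
        simp [lsc_cons_cons, lsc_single]
    | cons a' t' =>
      simp only [List.cons_append] at ih ⊢
      rw [lsc_cons_cons, ih, lsc_cons_cons]
      ring

/-- cyclic sign change count -/
def csc (s : List Bool) : ℕ :=
  match s.head? with
  | none => 0
  | some h => lsc (s ++ [h])

lemma csc_nil : csc [] = 0 := rfl

lemma csc_cons (x : Bool) (t : List Bool) : csc (x :: t) = lsc (x :: t ++ [x]) := rfl

lemma csc_eq_lsc {s : List Bool} {h : Bool} (hs : s.head? = some h) :
    csc s = lsc (s ++ [h]) := by
  cases s with
  | nil => simp at hs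
  | cons a t =>
    simp only [List.head?_cons, Option.some.injEq] at hs
    subst hs
    rfl

lemma csc_rotate_one (s : List Bool) : csc (s.rotate 1) = csc s := by
  cases s with
  | nil => simp [List.rotate_nil]
  | cons x t =>
    rw [List.rotate_cons_succ, List.rotate_zero]
    cases t with
    | nil => rfl
    | cons y t' =>
      have e1 : csc ((y :: t') ++ [x]) = lsc ((y :: t') ++ [x]) + (if x = y then 0 else 1) := by
        rw [show (y :: t') ++ [x] = y :: (t' ++ [x]) from rfl, csc_cons]
        have e : (y :: (t' ++ [x])) ++ [y] = (y :: t') ++ [x, y] := by simp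
        rw [e, lsc_concat_concat]
        simp only [List.cons_append]
      rw [e1, csc_cons]
      simp only [List.cons_append]
      rw [lsc_cons_cons]
      ring

lemma csc_rotate (s : List Bool) (n : ℕ) : csc (s.rotate n) = csc s := by
  induction n generalizing s with
  | zero => rw [List.rotate_zero]
  | succ n ih =>
    have e : s.rotate (n + 1) = (s.rotate 1).rotate n := by
      rw [List.rotate_rotate, Nat.add_comm]
    rw [e, ih, csc_rotate_one]

lemma csc_isRotated {s t : List Bool} (h : s ~r t) : csc s = csc t := by
  obtain ⟨n, rfl⟩ := h
  rw [csc_rotate]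

def dbl (s : List Bool) : List Bool := s.flatMap (fun a => [a, a])

lemma dbl_cons (a : Bool) (t : List Bool) : dbl (a :: t) = a :: a :: dbl t := rfl

lemma lsc_dbl_aux : ∀ (s : List Bool) (x : Bool), lsc (dbl s ++ [x]) = lsc (s ++ [x]) := by
  intro s
  induction s with
  | nil => intro x; rfl
  | cons a t ih =>
    intro x
    rw [dbl_cons]
    cases t with
    | nil => simp [lsc_cons_cons, lsc_single, dbl]
    | cons b t' =>
      rw [dbl_cons] at ih ⊢
      simp only [List.cons_append] at ih ⊢
      rw [lsc_cons_cons (x := a) (y := a), if_pos rfl, Nat.zero_add,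
        lsc_cons_cons (x := a) (y := b), ih x, lsc_cons_cons]

lemma csc_dbl (s : List Bool) : csc (dbl s) = csc s := by
  cases s with
  | nil => rfl
  | cons a t =>
    rw [csc_cons (x := a) (t := t)]
    have e : dbl (a :: t) = a :: (a :: dbl t) := rfl
    rw [e, csc_cons]
    calc lsc (a :: (a :: dbl t) ++ [a]) = lsc (dbl (a :: t) ++ [a]) := rfl
      _ = lsc ((a :: t) ++ [a]) := lsc_dbl_aux _ _

/-- `rep` for arbitrary type -/
def repg {α : Type*} (d : ℕ) (L : List α) : List α := (List.replicate d L).flatten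

lemma repg_zero {α : Type*} (L : List α) : repg 0 L = [] := rfl

lemma repg_succ {α : Type*} (d : ℕ) (L : List α) : repg (d + 1) L = L ++ repg d L := by
  unfold repg; rw [List.replicate_succ, List.flatten_cons]

lemma length_repg {α : Type*} (d : ℕ) (L : List α) : (repg d L).length = d * L.length := by
  induction d with
  | zero => simp [repg_zero]
  | succ d ih => rw [repg_succ, List.length_append, ih]; ring

lemma repg_ne_nil {α : Type*} {d : ℕ} {L : List α} (hd : 1 ≤ d) (hL : L ≠ []) :
    repg d L ≠ [] := by
  intro h
  have h2 := congrArg List.length h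
  rw [length_repg] at h2
  simp only [List.length_nil] at h2
  rcases Nat.mul_eq_zero.1 h2 with h3 | h3
  · omega
  · exact hL (List.length_eq_zero_iff.1 h3)

lemma head?_repg {α : Type*} {L : List α} (hL : L ≠ []) {d : ℕ} (hd : d ≠ 0) :
    (repg d L).head? = L.head? := by
  cases d with
  | zero => exact absurd rfl hd
  | succ d => rw [repg_succ, List.head?_append_of_ne_nil _ hL]

lemma csc_repg (s : List Bool) (hs : s ≠ []) : ∀ d, 1 ≤ d → csc (repg d s) = d * csc s := by
  cases s with
  | nil => exact absurd rfl hs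
  | cons a t =>
    have key : ∀ d, csc (repg (d+1) (a :: t)) = (d+1) * csc (a :: t) := by
      intro d
      induction d with
      | zero => rw [repg_succ, repg_zero, List.append_nil, Nat.one_mul]
      | succ d ih =>
        have hRne : repg (d+1) (a :: t) ≠ [] := repg_ne_nil (by omega) (by simp)
        have hRhead : (repg (d+1) (a :: t)).head? = some a := by
          rw [head?_repg (by simp) (by omega)]; rfl
        have hBhead : (repg (d+1) (a :: t) ++ [a]).head? = some a := by
          rw [List.head?_append_of_ne_nil _ hRne]; exact hRhead
        have e0 : csc (repg (d+2) (a :: t)) = lsc ((a :: t) ++ (repg (d+1) (a :: t) ++ [a])) := by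
          have h1 : (repg (d+2) (a :: t)).head? = some a := by
            rw [head?_repg (by simp) (by omega)]; rfl
          rw [csc_eq_lsc h1, repg_succ, List.append_assoc]
        rw [e0, lsc_split _ _ a hBhead, ← csc_eq_lsc hRhead, ih,
          ← csc_eq_lsc (show (a :: t).head? = some a from rfl)]
        ring
    intro d hd
    cases d with
    | zero => omega
    | succ d => exact key d

lemma lsc_zero_all_eq : ∀ (t : List Bool) (x : Bool), lsc (x :: t) = 0 →
    ∀ a ∈ x :: t, a = x := by
  intro t
  induction t with
  | nil => intro x _ a ha; simpa using ha
  | cons y t ih =>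
    intro x h a ha
    rw [lsc_cons_cons] at h
    have hxy : x = y := by
      by_contra hne
      rw [if_neg hne] at h
      omega
    subst hxy
    have h2 : lsc (x :: t) = 0 := by
      rw [if_pos rfl] at h
      omega
    rcases List.mem_cons.1 ha with rfl | ha'
    · rfl
    · exact ih x h2 a ha'

lemma csc_zero_const {s : List Bool} {h : Bool} (hs : s.head? = some h) (hz : csc s = 0) :
    ∀ a ∈ s, a = h := by
  cases s with
  | nil => simp at hs
  | cons x t =>
    simp only [List.head?_cons, Option.some.injEq] at hs
    subst hs
    rw [csc_cons] at hz
    intro a ha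
    exact lsc_zero_all_eq _ _ hz a (by
      rcases List.mem_cons.1 ha with rfl | ha'
      · exact List.mem_cons_self
      · exact List.mem_cons_of_mem _ (List.mem_append_left _ ha'))

/-! ### The doubling substitution `D` on `List Bool` and the core argument -/

def Dbl (s : List Bool) : List Bool := s.flatMap (fun a => [a, !a])

lemma Dbl_nil : Dbl [] = [] := rfl
lemma Dbl_cons (a : Bool) (t : List Bool) : Dbl (a :: t) = a :: (!a) :: Dbl t := rfl
lemma Dbl_append (L M : List Bool) : Dbl (L ++ M) = Dbl L ++ Dbl M :=
  List.flatMap_append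

lemma length_Dbl (L : List Bool) : (Dbl L).length = 2 * L.length := by
  induction L with
  | nil => rfl
  | cons a t ih => rw [Dbl_cons, List.length_cons, List.length_cons, ih, List.length_cons]; ring

lemma Dbl_ne_nil {L : List Bool} (h : L ≠ []) : Dbl L ≠ [] := by
  cases L with
  | nil => exact absurd rfl h
  | cons a t => rw [Dbl_cons]; simp

lemma Dbl_inj : ∀ {L M : List Bool}, Dbl L = Dbl M → L = M := by
  intro L
  induction L with
  | nil =>
    intro M h
    cases M with
    | nil => rfl
    | cons b t => rw [Dbl_nil, Dbl_cons] at h; exact absurd h.symm (by simp)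
  | cons a t ih =>
    intro M h
    cases M with
    | nil => rw [Dbl_nil, Dbl_cons] at h; exact absurd h (by simp)
    | cons b u =>
      rw [Dbl_cons, Dbl_cons] at h
      injection h with h1 h'
      injection h' with h2 h3
      rw [h1, ih h3]

lemma rot1_cons {α : Type*} (x : α) (l : List α) : (x :: l).rotate 1 = l ++ [x] := by
  rw [List.rotate_cons_succ, List.rotate_zero]

lemma Dbl_rotate_one (L : List Bool) : Dbl (L.rotate 1) = (Dbl L).rotate 2 := by
  cases L with
  | nil => simp [Dbl_nil, List.rotate_nil]
  | cons a t =>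
    rw [rot1_cons, Dbl_append, Dbl_cons, Dbl_nil, Dbl_cons,
      show (2:ℕ) = 1 + 1 from rfl, ← List.rotate_rotate, rot1_cons]
    simp only [List.cons_append]
    rw [rot1_cons]
    simp

lemma Dbl_rotate (L : List Bool) (n : ℕ) : Dbl (L.rotate n) = (Dbl L).rotate (2 * n) := by
  induction n generalizing L with
  | zero => simp
  | succ n ih =>
    have e : L.rotate (n + 1) = (L.rotate 1).rotate n := by
      rw [List.rotate_rotate, Nat.add_comm]
    rw [e, ih, Dbl_rotate_one, List.rotate_rotate]
    congr 1
    ring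

lemma Dbl_repg (d : ℕ) (L : List Bool) : Dbl (repg d L) = repg d (Dbl L) := by
  induction d with
  | zero => rfl
  | succ d ih => rw [repg_succ, Dbl_append, ih, repg_succ]

lemma DblK_repg (k d : ℕ) (L : List Bool) : Dbl^[k] (repg d L) = repg d (Dbl^[k] L) := by
  induction k generalizing L with
  | zero => rfl
  | succ k ih =>
    simp only [Function.iterate_succ_apply]
    rw [Dbl_repg, ih]

lemma DblK_ne_nil {L : List Bool} (h : L ≠ []) (k : ℕ) : Dbl^[k] L ≠ [] := by
  induction k with
  | zero => exact h
  | succ k ih => rw [Function.iterate_succ_apply']; exact Dbl_ne_nil ih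

lemma length_DblK (L : List Bool) (k : ℕ) : (Dbl^[k] L).length = 2 ^ k * L.length := by
  induction k with
  | zero => simp
  | succ k ih => rw [Function.iterate_succ_apply', length_Dbl, ih, pow_succ]; ring

lemma Dbl_get? (U : List Bool) : ∀ (i : ℕ), i < U.length →
    (Dbl U)[2*i]? = U[i]? ∧ (Dbl U)[2*i+1]? = U[i]?.map (fun b => !b) := by
  induction U with
  | nil => intro i h; simp at h
  | cons a t ih =>
    intro i hi
    cases i with
    | zero => simp [Dbl_cons]
    | succ i =>
      have h' : i < t.length := by simpa using hi
      obtain ⟨e1, e2⟩ := ih i h'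
      constructor
      · rw [show 2*(i+1) = (2*i+1)+1 by ring, Dbl_cons, List.getElem?_cons_succ,
          show 2*i+1 = (2*i)+1 from rfl, List.getElem?_cons_succ, e1, List.getElem?_cons_succ]
      · rw [show 2*(i+1)+1 = ((2*i+1)+1)+1 by ring, Dbl_cons, List.getElem?_cons_succ,
          List.getElem?_cons_succ, e2, List.getElem?_cons_succ]

lemma consec_eq_replicate : ∀ (L : List Bool),
    (∀ i, i + 1 < L.length → L[i+1]? = L[i]?) → ∃ c, L = List.replicate L.length c := by
  intro L
  induction L with
  | nil => exact fun _ => ⟨true, rfl⟩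
  | cons a t ih =>
    intro h
    obtain ⟨c, hc⟩ := ih (fun i hi => by
      have := h (i+1) (by simpa using hi)
      rwa [List.getElem?_cons_succ, List.getElem?_cons_succ] at this)
    cases t with
    | nil => exact ⟨a, rfl⟩
    | cons b t' =>
      refine ⟨a, ?_⟩
      have h0 := h 0 (by simp)
      simp only [List.getElem?_cons_succ, List.getElem?_cons_zero] at h0
      have hb : b = a := by simpa using h0
      have hcb : c = b := by
        have := congrArg (fun l => l[0]?) hc
        simpa [List.replicate_succ] using this.symm
      have hmem : ∀ y ∈ a :: b :: t', y = a := by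
        intro y hy
        rcases List.mem_cons.1 hy with rfl | hy'
        · rfl
        · have hyc : y = c := by
            rw [hc] at hy'
            exact List.eq_of_mem_replicate hy'
          rw [hyc, hcb, hb]
      exact List.eq_replicate_of_mem hmem

lemma step_odd (U : List Bool) (hU : U ≠ []) (m : ℕ) (hm : ¬ 2 ∣ m)
    (h : (Dbl U).rotate m = Dbl U) : ∃ c, U = List.replicate U.length c := by
  set s := Dbl U with hs
  set N := s.length with hN
  have hUlen : 0 < U.length := List.length_pos_iff.2 hU
  have hNlen : N = 2 * U.length := by rw [hN, hs, length_Dbl]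
  have hNpos : 0 < N := by omega
  have hper : ∀ j, j < N → s[(j+m) % N]? = s[j]? := by
    intro j hj
    conv_rhs => rw [← h]
    rw [List.getElem?_rotate hj]
  have hblk : ∀ i, i < U.length →
      s[2*i]? = U[i]? ∧ s[2*i+1]? = U[i]?.map (fun b => !b) := fun i hi => Dbl_get? U i hi
  -- key step at odd positions
  have hodd : ∀ j, ¬ 2 ∣ j → j + 1 < N → s[j+1]? = s[j]?.map (fun b => !b) := by
    intro j hjodd hj1
    set j' := (j + m) % N with hj'
    have hj'lt : j' < N := Nat.mod_lt _ hNpos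
    have hj'par : j' % 2 = 0 := by
      have h2N : (2:ℕ) ∣ N := ⟨U.length, hNlen⟩
      have := Nat.mod_mod_of_dvd (j + m) h2N
      rw [← hj'] at this
      omega
    have hj'1 : j' + 1 < N := by omega
    obtain ⟨i', hi'⟩ : ∃ i', j' = 2 * i' := ⟨j' / 2, by omega⟩
    have hi'lt : i' < U.length := by omega
    have e1 : s[j]? = s[j']? := (hper j (by omega)).symm
    have e2 : s[j+1]? = s[j'+1]? := by
      have := hper (j+1) (by omega)
      rw [← this]
      congr 1
      rw [hj']
      rw [Nat.add_right_comm j 1 m, Nat.add_mod (j + m) 1 N,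
        Nat.mod_eq_of_lt (show 1 < N by omega)]
      exact Nat.mod_eq_of_lt hj'1
    have e3 : s[j'+1]? = s[j']?.map (fun b => !b) := by
      obtain ⟨hb1, hb2⟩ := hblk i' hi'lt
      rw [hi', hb2, ← hb1]
    rw [e2, e3, ← e1]
  -- consecutive equality in U
  have hcons : ∀ i, i + 1 < U.length → U[i+1]? = U[i]? := by
    intro i hi
    obtain ⟨hb1, hb2⟩ := hblk i (by omega)
    obtain ⟨hc1, hc2⟩ := hblk (i+1) hi
    have hjodd : ¬ 2 ∣ (2*i+1) := by omega
    have hstep := hodd (2*i+1) hjodd (by omega)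
    have e4 : (2*i+1)+1 = 2*(i+1) := by ring
    rw [e4, hc1, hb2] at hstep
    -- hstep : U[i+1]? = (U[i]?.map not).map not
    rw [hstep]
    cases hUi : U[i]? with
    | none => rfl
    | some b => simp
  obtain ⟨c, hc⟩ := consec_eq_replicate U hcons
  exact ⟨c, hc⟩

lemma Dbl_not_replicate (X : List Bool) (hX : X ≠ []) (N : ℕ) (c : Bool) :
    Dbl X ≠ List.replicate N c := by
  intro h
  cases X with
  | nil => exact hX rfl
  | cons a t =>
    rw [Dbl_cons] at h
    cases N with
    | zero => simp at h
    | succ N =>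
      cases N with
      | zero => simp at h
      | succ N =>
        rw [List.replicate_succ, List.replicate_succ] at h
        injection h with h1 h'
        injection h' with h2 _
        rw [← h1] at h2
        exact Bool.not_ne_self a h2

lemma step_even (U : List Bool) (m : ℕ) (h2 : 2 ∣ m)
    (h : (Dbl U).rotate m = Dbl U) : U.rotate (m / 2) = U := by
  apply Dbl_inj
  rw [Dbl_rotate, Nat.mul_div_cancel' h2, h]

lemma descend : ∀ (k : ℕ) (u : List Bool), u ≠ [] → ∀ m, 1 ≤ m →
    (Dbl^[k] u).rotate m = Dbl^[k] u →
    (∃ c, u = List.replicate u.length c) ∨ (2^k ∣ m ∧ u.rotate (m / 2^k) = u) := by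
  intro k
  induction k with
  | zero =>
    intro u _ m _ h
    right
    exact ⟨one_dvd m, by simpa using h⟩
  | succ k ih =>
    intro u hu m hm h
    rw [Function.iterate_succ_apply'] at h
    by_cases h2 : 2 ∣ m
    · have hU : (Dbl^[k] u).rotate (m / 2) = Dbl^[k] u := step_even _ m h2 h
      have hm2 : 1 ≤ m / 2 := by omega
      rcases ih u hu (m / 2) hm2 hU with hconst | ⟨hdvd, hrot⟩
      · exact Or.inl hconst
      · right
        constructor
        · obtain ⟨j, hj⟩ := hdvd
          refine ⟨j, ?_⟩
          have h3 : m = 2 * (m / 2) := by omega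
          rw [h3, hj, pow_succ]
          ring
        · have e : m / 2^(k+1) = (m / 2) / 2^k := by
            rw [Nat.div_div_eq_div_mul, pow_succ, Nat.mul_comm 2 (2^k)]
          rw [e]
          exact hrot
    · obtain ⟨c, hc⟩ := step_odd (Dbl^[k] u) (DblK_ne_nil hu k) m h2 h
      cases k with
      | zero => exact Or.inl ⟨c, by simpa using hc⟩
      | succ k =>
        exfalso
        rw [Function.iterate_succ_apply'] at hc
        exact Dbl_not_replicate _ (DblK_ne_nil hu k) _ _ hc

/-! ### rotations of repeated words, periodicity -/

lemma repg_comm {α : Type*} (u : List α) (Q : ℕ) : u ++ repg Q u = repg Q u ++ u := by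
  induction Q with
  | zero => simp [repg_zero]
  | succ Q ih =>
    rw [repg_succ]
    simp only [List.append_assoc]
    rw [ih]

lemma rotate_repg_aux {α : Type*} (u : List α) (s : ℕ) (hs : s ≤ u.length) : ∀ Q : ℕ,
    repg (Q+1) (u.rotate s) = u.drop s ++ repg Q u ++ u.take s := by
  intro Q
  induction Q with
  | zero =>
    rw [repg_succ, repg_zero, List.append_nil, List.rotate_eq_drop_append_take hs,
      repg_zero, List.append_nil]
  | succ Q ih =>
    rw [repg_succ, ih, List.rotate_eq_drop_append_take hs, repg_succ]
    set A := u.take s with hA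
    set B := u.drop s with hB
    have hu2 : u = A ++ B := by rw [hA, hB, List.take_append_drop]
    rw [hu2]
    simp only [List.append_assoc]

lemma rotate_repg {α : Type*} (u : List α) (hu : u ≠ []) (Q : ℕ) : ∀ (r : ℕ),
    (repg (Q+1) u).rotate r = repg (Q+1) (u.rotate (r % u.length)) := by
  have hn : 0 < u.length := List.length_pos_iff.2 hu
  intro r
  induction r using Nat.strong_induction_on with
  | _ r IH =>
  by_cases hr : r < u.length
  · rw [Nat.mod_eq_of_lt hr, rotate_repg_aux u r (le_of_lt hr) Q]
    rw [List.rotate_eq_drop_append_take (by rw [length_repg]; nlinarith)]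
    conv_lhs => rw [repg_succ, List.drop_append_of_le_length (le_of_lt hr),
      List.take_append_of_le_length (le_of_lt hr)]
  · push_neg at hr
    have hrot_n : (repg (Q+1) u).rotate u.length = repg (Q+1) u := by
      rw [List.rotate_eq_drop_append_take (by rw [length_repg]; nlinarith)]
      rw [repg_succ, List.drop_left, List.take_left, ← repg_comm, ← repg_succ]
    have e1 : (repg (Q+1) u).rotate r = (repg (Q+1) u).rotate (r - u.length) := by
      conv_lhs => rw [show r = u.length + (r - u.length) by omega, ← List.rotate_rotate,
        hrot_n]
    have e2 : (r - u.length) % u.length = r % u.length := by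
      conv_rhs => rw [show r = (r - u.length) + u.length by omega]
      rw [Nat.add_mod_right]
    rw [e1, IH (r - u.length) (by omega), e2]

lemma period_repg {α : Type*} : ∀ (n : ℕ) (u : List α), u.length = n → ∀ t, 1 ≤ t → t ∣ n →
    u.rotate t = u → u = repg (n / t) (u.take t) := by
  intro n
  induction n using Nat.strong_induction_on with
  | _ n IH =>
  intro u hlen t ht htn hrot
  rcases Nat.eq_zero_or_pos n with hn0 | hnpos
  · subst hn0
    have : u = [] := List.length_eq_zero_iff.1 hlen
    rw [this, Nat.zero_div, repg_zero]
  have htle : t ≤ n := Nat.le_of_dvd hnpos htn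
  have hA : (u.take t).length = t := by rw [List.length_take, hlen]; omega
  have hu : u.take t ++ u.drop t = u := List.take_append_drop t u
  have hBA : u.drop t ++ u.take t = u.take t ++ u.drop t := by
    have h1 : u.rotate t = u.drop t ++ u.take t := List.rotate_eq_drop_append_take (by omega)
    rw [← h1, hrot]
    exact hu.symm
  rcases eq_or_ne (u.drop t) [] with hB0 | hBne
  · have htn' : t = n := by
      have := congrArg List.length hB0
      rw [List.length_drop, hlen] at this
      simp at this
      omega
    subst htn'
    have hT : u.take t = u := by
      conv_rhs => rw [← hu, hB0]
      rw [List.append_nil]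
    rw [Nat.div_self hnpos, repg_succ, repg_zero, List.append_nil, hT]
  · have hBlen : (u.drop t).length = n - t := by rw [List.length_drop, hlen]
    have htltn : t < n := by
      rcases Nat.lt_or_ge t n with h | h
      · exact h
      · exfalso
        have : n - t = 0 := by omega
        rw [this] at hBlen
        exact hBne (List.length_eq_zero_iff.1 hBlen)
    have hn2t : 2 * t ≤ n := by
      obtain ⟨q, hq⟩ := htn
      rcases Nat.lt_or_ge q 2 with hq2 | hq2
      · exfalso
        have hq1 : q ≤ 1 := by omega
        nlinarith
      · nlinarith
    have htB : t ≤ (u.drop t).length := by omega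
    have htakeB : (u.drop t).take t = u.take t := by
      have := congrArg (List.take t) hBA
      rwa [List.take_append_of_le_length htB, List.take_left' hA] at this
    have hrotB : (u.drop t).rotate t = u.drop t := by
      have := congrArg (List.drop t) hBA
      rw [List.drop_append_of_le_length htB, List.drop_left' hA] at this
      rw [List.rotate_eq_drop_append_take htB, htakeB]
      exact this
    obtain ⟨q, hq⟩ := htn
    have hq0 : q ≠ 0 := by
      rintro rfl
      simp at hq
      omega
    obtain ⟨q', rfl⟩ : ∃ q', q = q' + 1 := ⟨q - 1, by omega⟩
    have h1 : n = t * q' + t := by rw [hq]; ring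
    have hdvd2 : t ∣ (n - t) := ⟨q', by omega⟩
    have hIH := IH (n - t) (by omega) (u.drop t) hBlen t ht hdvd2 hrotB
    rw [htakeB] at hIH
    have harith : (n - t) / t + 1 = n / t := by
      have h2 : n - t = t * q' := by omega
      rw [h2, hq, Nat.mul_div_cancel_left _ (by omega), Nat.mul_div_cancel_left _ (by omega)]
    conv_lhs => rw [← hu]
    rw [hIH, ← repg_succ, harith]

lemma repg_cancel {α : Type*} (Q : ℕ) (X Y : List α) (h : repg (Q+1) X = repg (Q+1) Y)
    (hlen : X.length = Y.length) : X = Y := by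
  have h1 := congrArg (List.take X.length) h
  rw [repg_succ, repg_succ, List.take_left' rfl, List.take_left' hlen.symm] at h1
  exact h1

lemma repg_replicate {α : Type*} (d n : ℕ) (c : α) :
    repg d (List.replicate n c) = List.replicate (d * n) c := by
  induction d with
  | zero => rw [repg_zero, Nat.zero_mul, List.replicate_zero]
  | succ d ih =>
    rw [repg_succ, ih, show (d+1)*n = n + d * n by ring, List.replicate_add]

/-! ### the core theorem -/

theorem core : ∀ n : ℕ, ∀ u v : List Bool, u.length = n → u ≠ [] →
    ∀ k, 1 ≤ k → Dbl^[k] u = repg (2^k) v → v ~r u → False := by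
  intro n
  induction n using Nat.strong_induction_on with
  | _ n IH =>
  intro u v hlen hu k hk heq hvr
  have hn : 1 ≤ n := by
    have := List.length_pos_iff.2 hu
    omega
  have hvlen : v.length = n := by rw [← hlen]; exact hvr.perm.length_eq
  have hvne : v ≠ [] := by
    intro hcon
    rw [hcon] at hvlen
    simp at hvlen
    omega
  have hQform : (2:ℕ)^k = (2^k - 1) + 1 := by
    have := Nat.one_le_two_pow (n := k)
    omega
  have hper : (Dbl^[k] u).rotate n = Dbl^[k] u := by
    rw [heq, hQform, rotate_repg v hvne _ n, hvlen, Nat.mod_self, List.rotate_zero]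
  rcases descend k u hu n hn hper with ⟨c, hc⟩ | ⟨hdvd, hrot⟩
  · -- u constant, contradiction with Dbl image
    rw [hlen] at hc
    have hvc : v = List.replicate n c := by
      apply List.eq_replicate_iff.2
      refine ⟨by rw [hvlen], ?_⟩
      intro b hb
      have hbu : b ∈ u := (hvr.perm.mem_iff).1 hb
      rw [hc] at hbu
      exact List.eq_of_mem_replicate hbu
    rw [hvc, repg_replicate] at heq
    cases k with
    | zero => omega
    | succ k =>
      rw [Function.iterate_succ_apply'] at heq
      exact Dbl_not_replicate _ (DblK_ne_nil hu k) _ _ heq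
  · set t := n / 2^k with htdef
    obtain ⟨j, hj⟩ := hdvd
    have h2k2 : (2:ℕ) ≤ 2^k := by
      calc (2:ℕ) = 2^1 := by norm_num
        _ ≤ 2^k := Nat.pow_le_pow_right (by omega) hk
    have hjpos : 1 ≤ j := by nlinarith
    have htj : t = j := by rw [htdef, hj, Nat.mul_div_cancel_left _ (by omega)]
    have htpos : 1 ≤ t := by omega
    have htn : t ∣ n := by rw [htj, hj]; exact ⟨2^k, by ring⟩
    have hper_u : u = repg (n / t) (u.take t) := period_repg n u hlen t htpos htn hrot
    have hnt : n / t = 2^k := by rw [htj, hj, Nat.mul_comm, Nat.mul_div_cancel_left _ (by omega)]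
    set a := u.take t with hadef
    have htlen : t ≤ n := Nat.le_of_dvd (by omega) htn
    have halen : a.length = t := by rw [hadef, List.length_take, hlen]; omega
    have hane : a ≠ [] := by
      intro hcon
      rw [hcon] at halen
      simp at halen
      omega
    rw [hnt] at hper_u
    have h1 : Dbl^[k] u = repg (2^k) (Dbl^[k] a) := by
      conv_lhs => rw [hper_u]
      rw [DblK_repg]
    have h2 : Dbl^[k] a = v := by
      apply repg_cancel (2^k - 1)
      · rw [← hQform, ← h1, heq]
      · rw [hvlen, length_DblK, halen, htj, ← hj]
    obtain ⟨r, hr⟩ := hvr.symm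
    have h3 : v = repg (2^k) (a.rotate (r % t)) := by
      rw [← hr]
      conv_lhs => rw [hper_u, hQform, rotate_repg a hane _ r, halen]
      rw [← hQform]
    have htltn : t < n := by nlinarith
    exact IH t htltn a (a.rotate (r % t)) halen hane k hk (h2.trans h3)
      (IsRotated.forall a (r % t))

/-! ### glue lemmas -/

lemma cycReduced_singleton (x : Ltr) : CycReduced [x] := by
  unfold CycReduced Reduced
  refine List.isChain_cons_cons.2 ⟨?_, List.isChain_singleton x⟩
  intro hc
  have := hc.2
  simp at this

lemma exists_cycReduced : ∀ (n : ℕ) (L : List Ltr), L.length = n → Reduced L →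
    ∃ w, CycReduced w ∧ IsConj (FreeGroup.mk L) (FreeGroup.mk w) := by
  intro n
  induction n using Nat.strong_induction_on with
  | _ n IH =>
  intro L hlen hred
  by_cases hcyc : CycReduced L
  · exact ⟨L, hcyc, IsConj.refl _⟩
  cases L with
  | nil => exact absurd CycReduced.nil hcyc
  | cons x t =>
    cases t with
    | nil => exact absurd (cycReduced_singleton x) hcyc
    | cons y t' =>
      -- failure must be at the junction
      have hjunc : ∃ l ∈ (x :: y :: t').getLast?, ∃ h ∈ (x :: y :: t').head?, ¬ Rel l h := by
        by_contra hno
        push_neg at hno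
        exact hcyc (reduced_append_iff.2 ⟨hred, hred, fun a ha b hb => hno a ha b hb⟩)
      obtain ⟨l, hl, hh, hhh, hnr⟩ := hjunc
      simp only [List.head?_cons, Option.mem_def, Option.some.injEq] at hhh
      subst hhh
      rw [rel_iff] at hnr
      push_neg at hnr
      -- x = linv l
      have hxl : x = linv l := hnr
      have hlast : (x :: y :: t').getLast (by simp) = l := by
        rw [List.getLast?_eq_getLast (l := x :: y :: t') (by simp)] at hl
        simpa using hl
      have hdec : (y :: t').dropLast ++ [l] = y :: t' := by
        have h0 : (x :: y :: t').dropLast ++ [(x :: y :: t').getLast (by simp)] = x :: y :: t' :=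
          List.dropLast_append_getLast _
        rw [hlast] at h0
        have h1 : (x :: y :: t').dropLast = x :: (y :: t').dropLast := rfl
        rw [h1] at h0
        exact (List.cons.inj h0).2
      set M := (y :: t').dropLast with hM
      have hred' : Reduced M := by
        apply hred.infix
        exact ⟨[x], [l], by rw [← hdec]; simp⟩
      have hlenM : M.length < n := by
        have h2 := congrArg List.length hdec
        simp only [List.length_append, List.length_singleton, List.length_cons] at h2
        rw [← hlen]
        simp only [List.length_cons]
        omega
      obtain ⟨w, hwcr, hwconj⟩ := IH M.length hlenM M rfl hred'
      refine ⟨w, hwcr, IsConj.trans ?_ hwconj⟩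
      -- IsConj (mk (x :: y :: t')) (mk M)
      apply IsConj.symm
      refine isConj_iff.2 ⟨FreeGroup.mk [x], ?_⟩
      have hinv : (FreeGroup.mk [x] : FreeGroup Bool)⁻¹ = FreeGroup.mk [l] := by
        rw [FreeGroup.inv_mk, invRev_singleton, hxl, linv_linv]
      rw [hinv, FreeGroup.mul_mk, FreeGroup.mul_mk]
      congr 1
      rw [← hdec]
      simp

/-! ### positive words -/

def emb (u : List Bool) : List Ltr := u.map (fun a => (a, true))

lemma emb_cons (a : Bool) (t : List Bool) : emb (a :: t) = (a, true) :: emb t := rfl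

lemma emb_ne_nil {u : List Bool} (h : u ≠ []) : emb u ≠ [] := by
  cases u with
  | nil => exact absurd rfl h
  | cons a t => simp [emb]

lemma Phi_emb (u : List Bool) : Phi (emb u) = emb (Dbl u) := by
  induction u with
  | nil => rfl
  | cons a t ih =>
    rw [emb_cons, Phi_cons, ih, Dbl_cons, emb_cons, emb_cons]
    cases a <;> simp [blk]

lemma PhiK_emb (k : ℕ) (u : List Bool) : Phi^[k] (emb u) = emb (Dbl^[k] u) := by
  induction k generalizing u with
  | zero => rfl
  | succ k ih =>
    simp only [Function.iterate_succ_apply]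
    rw [Phi_emb, ih]

lemma rep_eq_repg (d : ℕ) (L : List Ltr) : rep d L = repg d L := rfl

lemma repg_map {α β : Type*} (f : α → β) (d : ℕ) (L : List α) :
    (repg d L).map f = repg d (L.map f) := by
  induction d with
  | zero => rfl
  | succ d ih => rw [repg_succ, repg_succ, List.map_append, ih]

lemma rep_emb (d : ℕ) (u : List Bool) : rep d (emb u) = emb (repg d u) := by
  rw [rep_eq_repg]
  exact (repg_map _ d u).symm ▸ (repg_map (fun a => (a, true)) d u).symm

lemma emb_all_true {w : List Ltr} (hall : ∀ x ∈ w, x.2 = true) :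
    emb (w.map Prod.fst) = w := by
  induction w with
  | nil => rfl
  | cons x t ih =>
    rw [List.map_cons, emb_cons, ih (fun y hy => hall y (List.mem_cons_of_mem _ hy))]
    have hx : x.2 = true := hall x (List.mem_cons_self)
    have : (x.1, true) = x := by
      rcases x with ⟨a, b⟩
      simp only at hx
      rw [hx]
    rw [this]

lemma emb_isRotated_cancel {u v : List Bool} (h : emb u ~r emb v) : u ~r v := by
  obtain ⟨r, hr⟩ := h
  refine ⟨r, ?_⟩
  have : (emb u).rotate r = emb (u.rotate r) := by
    unfold emb
    rw [List.map_rotate]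
  rw [this] at hr
  have hinj : Function.Injective (fun a : Bool => (a, true)) := by
    intro a b hab
    simpa using hab
  exact List.map_injective_iff.2 hinj hr

/-! ### signs -/

lemma snd_blk (x : Ltr) : (blk x).map Prod.snd = [x.2, x.2] := by
  rcases x with ⟨a, b⟩
  cases b <;> simp [blk]

lemma snd_Phi (L : List Ltr) : (Phi L).map Prod.snd = dbl (L.map Prod.snd) := by
  induction L with
  | nil => rfl
  | cons x t ih =>
    rw [Phi_cons, List.map_append, ih, snd_blk, List.map_cons, dbl_cons]
    rfl

lemma snd_PhiK (k : ℕ) (L : List Ltr) : (Phi^[k] L).map Prod.snd = dbl^[k] (L.map Prod.snd) := by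
  induction k generalizing L with
  | zero => rfl
  | succ k ih =>
    simp only [Function.iterate_succ_apply]
    rw [ih, snd_Phi]

lemma snd_rep (d : ℕ) (L : List Ltr) : (rep d L).map Prod.snd = repg d (L.map Prod.snd) := by
  rw [rep_eq_repg]
  exact repg_map Prod.snd d L

lemma csc_dblK (k : ℕ) (s : List Bool) : csc (dbl^[k] s) = csc s := by
  induction k with
  | zero => rfl
  | succ k ih => rw [Function.iterate_succ_apply', csc_dbl, ih]

/-! ### invRev transport -/

lemma invRev_append (A B : List Ltr) :
    FreeGroup.invRev (A ++ B) = FreeGroup.invRev B ++ FreeGroup.invRev A := by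
  simp [FreeGroup.invRev]

lemma blk_linv (x : Ltr) : blk (linv x) = FreeGroup.invRev (blk x) := by
  rcases x with ⟨a, b⟩
  cases b <;> simp [blk, linv, FreeGroup.invRev]

lemma invRev_Phi (L : List Ltr) : Phi (FreeGroup.invRev L) = FreeGroup.invRev (Phi L) := by
  induction L with
  | nil => rfl
  | cons x t ih =>
    rw [Phi_cons, invRev_append, invRev_cons, Phi_append, ih]
    congr 1
    rw [show Phi [linv x] = blk (linv x) ++ Phi [] from rfl, Phi_nil, List.append_nil, blk_linv]

lemma invRev_PhiK (k : ℕ) (L : List Ltr) :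
    Phi^[k] (FreeGroup.invRev L) = FreeGroup.invRev (Phi^[k] L) := by
  induction k generalizing L with
  | zero => rfl
  | succ k ih =>
    simp only [Function.iterate_succ_apply]
    rw [invRev_Phi, ih]

lemma invRev_rep (d : ℕ) (L : List Ltr) :
    FreeGroup.invRev (rep d L) = rep d (FreeGroup.invRev L) := by
  induction d with
  | zero => rfl
  | succ d ih =>
    rw [rep_succ, invRev_append, ih, rep_succ]
    simp only [rep_eq_repg]
    exact (repg_comm _ d).symm

lemma invRev_isRotated {L M : List Ltr} (h : L ~r M) :
    FreeGroup.invRev L ~r FreeGroup.invRev M := by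
  obtain ⟨r, rfl⟩ := h
  rcases eq_or_ne L [] with rfl | hne
  · simp [List.rotate_nil]
  rw [List.rotate_eq_drop_append_take_mod, invRev_append]
  conv_lhs => rw [← List.take_append_drop (r % L.length) L, invRev_append]
  exact List.isRotated_append

lemma mem_invRev {w : List Ltr} {x : Ltr} (h : x ∈ FreeGroup.invRev w) :
    ∃ y ∈ w, x = linv y := by
  unfold FreeGroup.invRev at h
  rw [List.mem_reverse, List.mem_map] at h
  obtain ⟨y, hy, hxy⟩ := h
  exact ⟨y, hy, hxy.symm⟩

/-! ### the positive endgame -/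

lemma positive_case (w : List Ltr) (hwne : w ≠ []) (k : ℕ) (hk : 1 ≤ k)
    (hall : ∀ x ∈ w, x.2 = true) (hrot : Phi^[k] w ~r rep (2^k) w) : False := by
  set u := w.map Prod.fst with hu
  have hw : w = emb u := (emb_all_true hall).symm
  rw [hw, PhiK_emb, rep_emb] at hrot
  have hrot' : Dbl^[k] u ~r repg (2^k) u := emb_isRotated_cancel hrot
  have hune : u ≠ [] := by
    intro hcon
    rw [hw, hcon] at hwne
    exact hwne rfl
  obtain ⟨r, hr⟩ := hrot'.symm
  have hQform : (2:ℕ)^k = (2^k - 1) + 1 := by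
    have := Nat.one_le_two_pow (n := k)
    omega
  have heq : Dbl^[k] u = repg (2^k) (u.rotate (r % u.length)) := by
    rw [← hr, hQform, rotate_repg u hune _ r]
  exact core u.length u (u.rotate (r % u.length)) rfl hune k hk heq
    (IsRotated.forall u (r % u.length))


end SapirProof

/-- No iterate of the Sapir endomorphism `φ(a) = ab`, `φ(b) = ba` of `F₂` maps a
nontrivial element to a conjugate of one of its powers. -/
theorem sapir_no_invariant_conjugacy_class :
    ∀ k d : ℕ, 1 ≤ k → 1 ≤ d → ∀ g : FreeGroup Bool, g ≠ 1 →
      ¬ IsConj ((sapir ^ k) g) (g ^ d) := by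
  classical
  intro k d hk hd g hg hconj
  open SapirProof in
  have hgred : SapirProof.Reduced g.toWord := by
    have h := SapirProof.reduced_reduce g.toWord
    rwa [FreeGroup.reduce_toWord] at h
  obtain ⟨w, hwcr, hconj_g⟩ := SapirProof.exists_cycReduced g.toWord.length g.toWord rfl hgred
  rw [FreeGroup.mk_toWord] at hconj_g
  have hwne : w ≠ [] := by
    rintro rfl
    obtain ⟨c, hc⟩ := isConj_iff.1 hconj_g
    apply hg
    have h1 : (FreeGroup.mk [] : FreeGroup Bool) = 1 := rfl
    rw [h1] at hc
    have h2 : g = c⁻¹ * 1 * c := by rw [← hc]; group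
    simpa using h2
  obtain ⟨c, hc⟩ := isConj_iff.1 hconj_g
  obtain ⟨e, he⟩ := isConj_iff.1 hconj
  have h1 : IsConj ((sapir ^ k) (FreeGroup.mk w)) ((FreeGroup.mk w) ^ d) := by
    refine isConj_iff.2 ⟨c * e * ((sapir ^ k) c)⁻¹, ?_⟩
    have hφw : (sapir ^ k) (FreeGroup.mk w)
        = (sapir ^ k) c * (sapir ^ k) g * ((sapir ^ k) c)⁻¹ := by
      rw [← hc, _root_.map_mul, _root_.map_mul, _root_.map_inv]
    have hpow : (FreeGroup.mk w) ^ d = c * g ^ d * c⁻¹ := by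
      rw [← hc, conj_pow]
    rw [hφw, hpow, ← he]
    group
  rw [SapirProof.sapir_pow_mk, FreeGroup.pow_mk] at h1
  have hPhine : SapirProof.Phi^[k] w ≠ [] := by
    intro hcon
    have h2 := congrArg List.length hcon
    rw [SapirProof.length_PhiK] at h2
    simp only [List.length_nil] at h2
    rcases Nat.mul_eq_zero.1 h2 with h3 | h3
    · have := Nat.one_le_two_pow (n := k)
      omega
    · exact hwne (List.length_eq_zero_iff.1 h3)
  have hrot : SapirProof.Phi^[k] w ~r SapirProof.rep d w := by
    apply SapirProof.isConj_cycReduced (SapirProof.cycReduced_PhiK hwcr k)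
      (SapirProof.cycReduced_rep hwcr d) hPhine
    exact h1
  have hn : 0 < w.length := List.length_pos_iff.2 hwne
  have hlen := hrot.perm.length_eq
  rw [SapirProof.length_PhiK, SapirProof.length_rep] at hlen
  have hd2k : d = 2 ^ k := (Nat.eq_of_mul_eq_mul_right hn hlen).symm
  subst hd2k
  set sg := w.map Prod.snd with hsg
  have hsgne : sg ≠ [] := by
    intro h
    rw [hsg] at h
    cases w <;> simp_all
  have hscrot : SapirProof.csc (SapirProof.dbl^[k] sg)
      = SapirProof.csc (SapirProof.repg (2^k) sg) := by
    rw [← SapirProof.snd_PhiK, ← SapirProof.snd_rep]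
    exact SapirProof.csc_isRotated (hrot.map Prod.snd)
  rw [SapirProof.csc_dblK,
    SapirProof.csc_repg sg hsgne _ Nat.one_le_two_pow] at hscrot
  have h2k2 : 2 ≤ 2^k := by
    calc (2:ℕ) = 2^1 := by norm_num
      _ ≤ 2^k := Nat.pow_le_pow_right (by omega) hk
  have hcsc0 : SapirProof.csc sg = 0 := by nlinarith [hscrot]
  obtain ⟨c0, hc0⟩ : ∃ c0, sg.head? = some c0 := by
    cases hsgc : sg with
    | nil => exact absurd hsgc hsgne
    | cons a t => exact ⟨a, by rw [List.head?_cons]⟩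
  have hall := SapirProof.csc_zero_const hc0 hcsc0
  have hallw : ∀ x ∈ w, x.2 = c0 := by
    intro x hx
    exact hall x.2 (by rw [hsg]; exact List.mem_map_of_mem hx)
  cases c0 with
  | true => exact SapirProof.positive_case w hwne k hk hallw hrot
  | false =>
    apply SapirProof.positive_case (FreeGroup.invRev w) ?_ k hk ?_ ?_
    · intro hcon
      apply hwne
      have h2 := congrArg List.length hcon
      rw [FreeGroup.invRev_length] at h2
      exact List.length_eq_zero_iff.1 h2
    · intro x hx
      obtain ⟨y, hy, hxy⟩ := SapirProof.mem_invRev hx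
      rw [hxy]
      have hy2 := hallw y hy
      simp [SapirProof.linv, hy2]
    · rw [SapirProof.invRev_PhiK, ← SapirProof.invRev_rep]
      exact SapirProof.invRev_isRotated hrot
end
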